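/- arXiv:2201.01351 — 4 statements merged into one kernel-verified Lean document; each statement's English description precedes it below -/
import Mathlib

section
/- Let s, t ∈ ℝ and let n ≥ 2 be an integer. The n×n real symmetric matrix A_n(s,t) with (i,j) entry min{i,j} + s + t·δ_{ij} (indices 1,…,n) is positive semidefinite if and only if t > -1/(2 + 2·cos(π/n)) and S_n(1, s+1; t) ≥ 0, where S_n(1,s+1;t) is the value of the sequence defined by S_0 = 1, S_1 = t + s + 1, S_m = (1+2t)·S_{m-1} − t²·S_{m-2}. -/
open Real

/-- The sequence `Sₙ(a,b;t)`: `S₀ = 1`, `S₁ = a·t + b`,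
`Sₙ = (1+2t)·Sₙ₋₁ − t²·Sₙ₋₂`. -/
def S (a b t : ℝ) : ℕ → ℝ
  | 0 => 1
  | 1 => a * t + b
  | n + 2 => (1 + 2 * t) * S a b t (n + 1) - t ^ 2 * S a b t n

/-- The `n×n` matrix `Aₙ(s,t)` with `(i,j)` entry `min{i,j} + s + t·δᵢⱼ`
(indices `1,…,n`). -/
def A (n : ℕ) (s t : ℝ) : Matrix (Fin n) (Fin n) ℝ :=
  Matrix.of fun i j =>
    ((min (i.1 + 1) (j.1 + 1) : ℕ) : ℝ) + s + if i = j then t else 0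

namespace AposAux

open Matrix Finset

/-- entries of the tridiagonal congruent matrix -/
def bmE (s t : ℝ) (i j : ℕ) : ℝ :=
  if i = j then (if i = 0 then 1 + s + t else 1 + 2*t)
  else if i + 1 = j ∨ j + 1 = i then -t else 0

def Bm (s t : ℝ) (n : ℕ) : Matrix (Fin n) (Fin n) ℝ :=
  Matrix.of fun i j => bmE s t i.1 j.1

/-- entries of the uniform tridiagonal matrix -/
def buE (t : ℝ) (i j : ℕ) : ℝ :=
  if i = j then 1 + 2*t else if i + 1 = j ∨ j + 1 = i then -t else 0

def Bu (t : ℝ) (m : ℕ) : Matrix (Fin m) (Fin m) ℝ :=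
  Matrix.of fun i j => buE t i.1 j.1

/-- the lower triangular all-ones matrix -/
def Cl (n : ℕ) : Matrix (Fin n) (Fin n) ℝ :=
  Matrix.of fun i j => if j.1 ≤ i.1 then 1 else 0

/-- padded entries of `A` -/
def nu (s t : ℝ) (a b : ℕ) : ℝ :=
  if a = 0 ∨ b = 0 then 0 else ((min a b : ℕ) : ℝ) + s + if a = b then t else 0

lemma succAbove_val {n : ℕ} (p : Fin (n+1)) (i : Fin n) :
    (p.succAbove i).1 = if i.1 < p.1 then i.1 else i.1 + 1 := by
  rw [Fin.succAbove]
  by_cases h : Fin.castSucc i < p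
  · rw [if_pos h, if_pos (by simpa [Fin.lt_def] using h)]
    rfl
  · rw [if_neg h, if_neg (by simpa [Fin.lt_def] using h)]
    rfl

lemma bmE_symm (s t : ℝ) (a b : ℕ) : bmE s t a b = bmE s t b a := by
  unfold bmE
  split_ifs <;>
    first
      | ring1
      | (exfalso; (try simp only [or_false, false_or, not_true, not_false_iff] at *);
         all_goals omega)

lemma bmE_succ_succ (s t : ℝ) (a b : ℕ) : bmE s t (a+1) (b+1) = buE t a b := by
  unfold bmE buE
  split_ifs <;>
    first
      | ring1
      | (exfalso; (try simp only [or_false, false_or, not_true, not_false_iff] at *);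
         all_goals omega)

/-- `bmE` is the second difference of `nu` -/
lemma nu_succ_succ (s t : ℝ) (a b : ℕ) : nu s t (a+1) (b+1)
    = ((min a b : ℕ) : ℝ) + 1 + s + (if a = b then t else 0) := by
  unfold nu
  rw [if_neg (by omega), Nat.succ_min_succ]
  rw [if_congr (by omega : (a+1 = b+1) ↔ (a = b)) rfl rfl]
  push_cast; ring

lemma bmE_eq_dd (s t : ℝ) (p k : ℕ) :
    bmE s t p k = (nu s t (p+1) (k+1) - nu s t p (k+1)) - (nu s t (p+1) k - nu s t p k) := by
  have h0 : ∀ a, nu s t a 0 = 0 := fun a => by simp [nu]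
  have h0' : ∀ a, nu s t 0 a = 0 := fun a => by simp [nu]
  rcases p with _ | i <;> rcases k with _ | j
  · rw [nu_succ_succ s t 0 0, h0' (0+1), h0 (0+1), h0 0, min_self]
    simp only [bmE]
    split_ifs <;> push_cast <;>
      first
        | ring1
        | (exfalso; (try simp only [or_false, false_or, not_true, not_false_iff] at *); all_goals omega)
  · rw [nu_succ_succ s t 0 (j+1), nu_succ_succ s t 0 j, h0' (j+1+1), h0' (j+1),
        Nat.zero_min, Nat.zero_min]
    simp only [bmE]
    split_ifs <;> push_cast <;>
      first
        | ring1
        | (exfalso; (try simp only [or_false, false_or, not_true, not_false_iff] at *); all_goals omega)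
  · rw [nu_succ_succ s t (i+1) 0, nu_succ_succ s t i 0, h0 (i+1+1), h0 (i+1),
        Nat.min_zero, Nat.min_zero]
    simp only [bmE]
    split_ifs <;> push_cast <;>
      first
        | ring1
        | (exfalso; (try simp only [or_false, false_or, not_true, not_false_iff] at *); all_goals omega)
  · rw [nu_succ_succ s t (i+1) (j+1), nu_succ_succ s t i (j+1),
        nu_succ_succ s t (i+1) j, nu_succ_succ s t i j]
    simp only [bmE]
    rcases Nat.lt_trichotomy i j with h | h | h
    · rw [min_eq_left (by omega : i+1 ≤ j+1), min_eq_left (by omega : i ≤ j+1),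
          min_eq_left (by omega : i ≤ j), min_eq_left (by omega : i+1 ≤ j)]
      split_ifs <;> push_cast <;>
        first
          | ring1
          | (exfalso; (try simp only [or_false, false_or, not_true, not_false_iff] at *); all_goals omega)
    · subst h
      rw [min_self, min_eq_left (by omega : i ≤ i+1), min_eq_right (by omega : i ≤ i+1),
          min_self]
      split_ifs <;> push_cast <;>
        first
          | ring1
          | (exfalso; (try simp only [or_false, false_or, not_true, not_false_iff] at *); all_goals omega)
    · rw [min_eq_right (by omega : j+1 ≤ i+1), min_eq_right (by omega : j ≤ i),
          min_eq_right (by omega : j ≤ i+1), min_eq_right (by omega : j+1 ≤ i)]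
      split_ifs <;> push_cast <;>
        first
          | ring1
          | (exfalso; (try simp only [or_false, false_or, not_true, not_false_iff] at *); all_goals omega)

lemma nu_zero_right (s t : ℝ) (a : ℕ) : nu s t a 0 = 0 := by simp [nu]

lemma sumsum_bmE (s t : ℝ) (P K : ℕ) :
    ∑ p ∈ range P, ∑ k ∈ range K, bmE s t p k = nu s t P K := by
  have inner : ∀ p : ℕ, ∑ k ∈ range K, bmE s t p k
      = (nu s t (p+1) K - nu s t p K) - (nu s t (p+1) 0 - nu s t p 0) := by
    intro p
    have := Finset.sum_range_sub (fun k => nu s t (p+1) k - nu s t p k) K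
    rw [← this]
    exact Finset.sum_congr rfl fun k _ => bmE_eq_dd s t p k
  have outer : ∑ p ∈ range P, ∑ k ∈ range K, bmE s t p k
      = ∑ p ∈ range P, (nu s t (p+1) K - nu s t p K) := by
    refine Finset.sum_congr rfl fun p _ => ?_
    rw [inner p, nu_zero_right, nu_zero_right]; ring
  rw [outer, Finset.sum_range_sub (fun p => nu s t p K) P]
  have : nu s t 0 K = 0 := by simp [nu]
  rw [this, sub_zero]

lemma sum_guard {n : ℕ} (f : ℕ → ℝ) (a : ℕ) (ha : a < n) :
    ∑ p : Fin n, (if p.1 ≤ a then f p.1 else 0) = ∑ p ∈ range (a+1), f p := by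
  rw [Fin.sum_univ_eq_sum_range (fun p => if p ≤ a then f p else 0) n]
  have h1 : ∑ p ∈ range (a+1), (if p ≤ a then f p else 0)
      = ∑ p ∈ range n, (if p ≤ a then f p else 0) :=
    Finset.sum_subset (Finset.range_subset_range.mpr (by omega))
      (fun x _ hnx => if_neg (by simp only [Finset.mem_range] at hnx; omega))
  rw [← h1]
  exact Finset.sum_congr rfl fun p hp =>
    if_pos (by simp only [Finset.mem_range] at hp; omega)

/-- congruence identity -/
lemma A_eq_conj (s t : ℝ) (n : ℕ) : A n s t = Cl n * Bm s t n * (Cl n)ᴴ := by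
  ext i j
  have h1 : (Cl n * Bm s t n * (Cl n)ᴴ) i j
      = ∑ k : Fin n, (if k.1 ≤ j.1 then
          (∑ p : Fin n, (if p.1 ≤ i.1 then bmE s t p.1 k.1 else 0)) else 0) := by
    rw [Matrix.mul_apply]
    refine Finset.sum_congr rfl fun k _ => ?_
    rw [Matrix.mul_apply, Finset.sum_mul]
    by_cases hk : k.1 ≤ j.1
    · rw [if_pos hk]
      refine Finset.sum_congr rfl fun p _ => ?_
      simp only [Cl, Bm, Matrix.conjTranspose_apply, Matrix.of_apply, star_trivial,
        if_pos hk, mul_one, ite_mul, one_mul, zero_mul]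
    · rw [if_neg hk]
      refine Finset.sum_eq_zero fun p _ => ?_
      simp only [Cl, Bm, Matrix.conjTranspose_apply, Matrix.of_apply, star_trivial,
        if_neg hk, mul_zero]
  have h2 : ∀ k : ℕ, (∑ p : Fin n, (if p.1 ≤ i.1 then bmE s t p.1 k else 0))
      = ∑ p ∈ range (i.1+1), bmE s t p k :=
    fun k => sum_guard (fun p => bmE s t p k) i.1 i.isLt
  have h3 : (Cl n * Bm s t n * (Cl n)ᴴ) i j
      = ∑ k ∈ range (j.1+1), ∑ p ∈ range (i.1+1), bmE s t p k := by
    rw [h1]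
    simp only [h2]
    exact sum_guard (fun k => ∑ p ∈ range (i.1+1), bmE s t p k) j.1 j.isLt
  rw [h3, Finset.sum_comm, sumsum_bmE]
  show ((min (i.1 + 1) (j.1 + 1) : ℕ) : ℝ) + s + (if i = j then t else 0) = _
  unfold nu
  have hor : ¬ ((i.1 : ℕ) + 1 = 0 ∨ (j.1 : ℕ) + 1 = 0) := by omega
  rw [if_neg hor]
  rw [if_congr (by rw [Fin.ext_iff]; omega : (i = j) ↔ (i.1+1 = j.1+1)) rfl rfl]

lemma det_Cl (n : ℕ) : (Cl n).det = 1 := by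
  rw [Matrix.det_of_lowerTriangular (Cl n)
    (by intro i j hij; simp only [Cl, Matrix.of_apply]
        exact if_neg (by simp [OrderDual.toDual_lt_toDual] at hij; omega))]
  simp [Cl]

lemma isUnit_det_Cl (n : ℕ) : IsUnit (Cl n).det := by rw [det_Cl]; exact isUnit_one

lemma posSemidef_A_iff_Bm (s t : ℝ) (n : ℕ) :
    (A n s t).PosSemidef ↔ (Bm s t n).PosSemidef := by
  have hu : IsUnit (Cl n).det := isUnit_det_Cl n
  have hu' : IsUnit ((Cl n)ᴴ).det := by
    rw [Matrix.det_conjTranspose]; exact hu.star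
  constructor
  · intro hA
    have hBm : Bm s t n = (Cl n)⁻¹ * A n s t * ((Cl n)⁻¹)ᴴ := by
      rw [A_eq_conj s t n, Matrix.conjTranspose_nonsing_inv]
      rw [Matrix.mul_assoc (Cl n) (Bm s t n) ((Cl n)ᴴ)]
      rw [← Matrix.mul_assoc ((Cl n)⁻¹) (Cl n) _, Matrix.nonsing_inv_mul _ hu,
        Matrix.one_mul, Matrix.mul_assoc, Matrix.mul_nonsing_inv _ hu', Matrix.mul_one]
    rw [hBm]
    exact hA.mul_mul_conjTranspose_same _
  · intro hB
    rw [A_eq_conj s t n]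
    exact hB.mul_mul_conjTranspose_same _

lemma Bm_sub_castSucc (s t : ℝ) (k : ℕ) :
    (Bm s t (k+1)).submatrix Fin.castSucc Fin.castSucc = Bm s t k := by
  ext i j
  rfl

/-- determinant recurrence -/
lemma detBm_rec (s t : ℝ) (m : ℕ) :
    (Bm s t (m+2)).det = (1 + 2*t) * (Bm s t (m+1)).det - t^2 * (Bm s t m).det := by
  set M := Bm s t (m+2) with hM
  rw [Matrix.det_succ_row M (Fin.last (m+1)), Fin.sum_univ_castSucc, Fin.sum_univ_castSucc]
  have hz : (∑ j : Fin m,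
      (-1 : ℝ) ^ ((Fin.last (m+1)).1 + ((j.castSucc).castSucc : Fin (m+2)).1) *
        M (Fin.last (m+1)) ((j.castSucc).castSucc) *
        (M.submatrix (Fin.last (m+1)).succAbove ((j.castSucc).castSucc).succAbove).det) = 0 := by
    refine Finset.sum_eq_zero fun j _ => ?_
    have hj := j.isLt
    have he : M (Fin.last (m+1)) ((j.castSucc).castSucc) = 0 := by
      show bmE s t (m+1) j.1 = 0
      unfold bmE
      rw [if_neg (by omega), if_neg (by omega)]
    rw [he, mul_zero, zero_mul]
  rw [hz, zero_add]
  -- the two surviving terms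
  have hlast : M (Fin.last (m+1)) (Fin.last (m+1)) = 1 + 2*t := by
    show bmE s t (m+1) (m+1) = 1 + 2*t
    unfold bmE
    rw [if_pos rfl, if_neg (by omega)]
  have hmid : M (Fin.last (m+1)) ((Fin.last m).castSucc) = -t := by
    show bmE s t (m+1) m = -t
    unfold bmE
    rw [if_neg (by omega), if_pos (by omega)]
  have hsign_last : ((-1 : ℝ)) ^ ((Fin.last (m+1)).1 + ((Fin.last (m+1))).1) = 1 :=
    Even.neg_one_pow ⟨m+1, rfl⟩
  have hsign_mid : ((-1 : ℝ)) ^ ((Fin.last (m+1)).1 + (((Fin.last m).castSucc : Fin (m+2))).1) = -1 :=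
    Odd.neg_one_pow ⟨m, by show m + 1 + m = 2*m+1; ring⟩
  have hminor_last :
      (M.submatrix (Fin.last (m+1)).succAbove (Fin.last (m+1)).succAbove).det
        = (Bm s t (m+1)).det := by
    rw [Fin.succAbove_last, hM, Bm_sub_castSucc]
  have hminor_mid :
      (M.submatrix (Fin.last (m+1)).succAbove ((Fin.last m).castSucc).succAbove).det
        = -t * (Bm s t m).det := by
    set M₁ := M.submatrix (Fin.last (m+1)).succAbove ((Fin.last m).castSucc).succAbove with hM₁
    rw [Matrix.det_succ_column M₁ (Fin.last m), Fin.sum_univ_castSucc]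
    have hz1 : (∑ i : Fin m,
        (-1 : ℝ) ^ (((i.castSucc : Fin (m+1))).1 + (Fin.last m).1) *
          M₁ i.castSucc (Fin.last m) *
          (M₁.submatrix (i.castSucc).succAbove (Fin.last m).succAbove).det) = 0 := by
      refine Finset.sum_eq_zero fun i _ => ?_
      have hi := i.isLt
      have he : M₁ i.castSucc (Fin.last m) = 0 := by
        show M ((Fin.last (m+1)).succAbove i.castSucc) (((Fin.last m).castSucc).succAbove (Fin.last m)) = 0
        rw [Fin.succAbove_last]
        have hcol : ((((Fin.last m).castSucc : Fin (m+2))).succAbove (Fin.last m)).1 = m+1 := by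
          rw [succAbove_val]
          simp
        have hrow : ((i.castSucc.castSucc : Fin (m+2))).1 = i.1 := rfl
        show bmE s t ((i.castSucc.castSucc : Fin (m+2))).1 ((((Fin.last m).castSucc : Fin (m+2))).succAbove (Fin.last m)).1 = 0
        rw [hcol, hrow]
        unfold bmE
        rw [if_neg (by omega), if_neg (by omega)]
      rw [he, mul_zero, zero_mul]
    rw [hz1, zero_add]
    have he2 : M₁ (Fin.last m) (Fin.last m) = -t := by
      show M ((Fin.last (m+1)).succAbove (Fin.last m)) (((Fin.last m).castSucc).succAbove (Fin.last m)) = -t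
      rw [Fin.succAbove_last]
      have hcol : ((((Fin.last m).castSucc : Fin (m+2))).succAbove (Fin.last m)).1 = m+1 := by
        rw [succAbove_val]
        simp
      show bmE s t (((Fin.last m).castSucc : Fin (m+2))).1 _ = -t
      rw [hcol]
      show bmE s t m (m+1) = -t
      unfold bmE
      rw [if_neg (by omega), if_pos (by omega)]
    have hsign2 : ((-1 : ℝ)) ^ ((Fin.last m).1 + (Fin.last m).1) = 1 :=
      Even.neg_one_pow ⟨m, rfl⟩
    have hminor2 : (M₁.submatrix (Fin.last m).succAbove (Fin.last m).succAbove).det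
        = (Bm s t m).det := by
      rw [Fin.succAbove_last]
      congr 1
      ext k l
      show M ((Fin.last (m+1)).succAbove (k.castSucc)) (((Fin.last m).castSucc).succAbove (l.castSucc)) = _
      rw [Fin.succAbove_last]
      have hl := l.isLt
      have hcol : ((((Fin.last m).castSucc : Fin (m+2))).succAbove (l.castSucc)).1 = l.1 := by
        rw [succAbove_val]
        simp only [Fin.coe_castSucc, Fin.val_last]
        rw [if_pos (by omega)]
      show bmE s t ((k.castSucc.castSucc : Fin (m+2))).1 ((((Fin.last m).castSucc : Fin (m+2))).succAbove (l.castSucc)).1 = _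
      rw [hcol]
      rfl
    rw [he2, hsign2, hminor2, one_mul]
  rw [hlast, hmid, hsign_last, hsign_mid, hminor_last, hminor_mid]
  ring

lemma S_unfold (a b t : ℝ) (k : ℕ) :
    S a b t (k+2) = (1 + 2 * t) * S a b t (k + 1) - t ^ 2 * S a b t k := rfl

lemma detBm (s t : ℝ) : ∀ k, (Bm s t k).det = S 1 (s+1) t k
  | 0 => by simp [S, Matrix.det_fin_zero]
  | 1 => by
      rw [Matrix.det_fin_one]
      show bmE s t 0 0 = S 1 (s+1) t 1
      unfold bmE S
      norm_num
      ring
  | (k+2) => by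
      rw [detBm_rec, detBm s t (k+1), detBm s t k, S_unfold]

/-! ### Quadratic forms -/

def pad {m : ℕ} (x : Fin m → ℝ) : ℕ → ℝ := fun j => if h : j < m then x ⟨j, h⟩ else 0

lemma pad_val {m : ℕ} (x : Fin m → ℝ) (i : Fin m) : pad x i.1 = x i := by
  unfold pad
  rw [dif_pos i.isLt]

lemma pad_ge {m : ℕ} (x : Fin m → ℝ) {j : ℕ} (h : m ≤ j) : pad x j = 0 := by
  unfold pad
  rw [dif_neg (by omega)]

lemma dot_eq (n : ℕ) (E : ℕ → ℕ → ℝ) (x : Fin n → ℝ) :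
    dotProduct x ((Matrix.of fun i j : Fin n => E i.1 j.1) *ᵥ x)
      = ∑ i ∈ range n, ∑ j ∈ range n, E i j * (pad x i * pad x j) := by
  rw [dotProduct]
  rw [← Fin.sum_univ_eq_sum_range (fun i => ∑ j ∈ range n, E i j * (pad x i * pad x j)) n]
  refine Finset.sum_congr rfl fun i _ => ?_
  rw [Matrix.mulVec, dotProduct, Finset.mul_sum]
  rw [← Fin.sum_univ_eq_sum_range (fun j => E i.1 j * (pad x i.1 * pad x j)) n]
  refine Finset.sum_congr rfl fun j _ => ?_
  rw [pad_val, pad_val]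
  show x i * ((Matrix.of fun i j : Fin n => E i.1 j.1) i j * x j) = _
  rw [Matrix.of_apply]
  ring

lemma sum_delta_diag (n : ℕ) (f : ℕ → ℕ → ℝ) :
    ∑ i ∈ range n, ∑ j ∈ range n, (if i = j then (1:ℝ) else 0) * f i j
      = ∑ i ∈ range n, f i i := by
  refine Finset.sum_congr rfl fun i hi => ?_
  simp only [ite_mul, one_mul, zero_mul]
  rw [Finset.sum_ite_eq (range n) i (fun j => f i j)]
  exact if_pos hi

lemma sum_delta_shift (n : ℕ) (y : ℕ → ℝ) (hy : ∀ j, n ≤ j → y j = 0) :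
    ∑ i ∈ range n, ∑ j ∈ range n, (if i+1 = j then (1:ℝ) else 0) * (y i * y j)
      = ∑ i ∈ range n, y i * y (i+1) := by
  refine Finset.sum_congr rfl fun i _ => ?_
  simp only [ite_mul, one_mul, zero_mul]
  rw [Finset.sum_ite_eq (range n) (i+1) (fun j => y i * y j)]
  by_cases h : i + 1 ∈ range n
  · rw [if_pos h]
  · rw [if_neg h, hy (i+1) (by simp only [Finset.mem_range] at h; omega), mul_zero]

lemma sum_delta_shift' (n : ℕ) (y : ℕ → ℝ) (hy : ∀ j, n ≤ j → y j = 0) :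
    ∑ i ∈ range n, ∑ j ∈ range n, (if j+1 = i then (1:ℝ) else 0) * (y i * y j)
      = ∑ i ∈ range n, y i * y (i+1) := by
  rw [Finset.sum_comm]
  rw [← sum_delta_shift n y hy]
  refine Finset.sum_congr rfl fun j _ => Finset.sum_congr rfl fun i _ => ?_
  ring

lemma sum_corner (n : ℕ) (y : ℕ → ℝ) (hy : ∀ j, n ≤ j → y j = 0) :
    ∑ i ∈ range n, ∑ j ∈ range n,
        ((if i = 0 then (1:ℝ) else 0) * (if j = 0 then (1:ℝ) else 0)) * (y i * y j)
      = y 0 * y 0 := by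
  rcases n with _ | k
  · simp [hy 0 (le_refl 0)]
  · have hin : ∀ i ∈ range (k+1), ∑ j ∈ range (k+1),
        ((if i = 0 then (1:ℝ) else 0) * (if j = 0 then (1:ℝ) else 0)) * (y i * y j)
        = (if i = 0 then (1:ℝ) else 0) * (y i * y 0) := by
      intro i _
      have : ∀ j, ((if i = 0 then (1:ℝ) else 0) * (if j = 0 then (1:ℝ) else 0)) * (y i * y j)
          = if j = 0 then (if i = 0 then (1:ℝ) else 0) * (y i * y j) else 0 := by
        intro j
        split_ifs <;> ring
      simp only [this]
      rw [Finset.sum_ite_eq' (range (k+1)) 0 (fun j => (if i = 0 then (1:ℝ) else 0) * (y i * y j))]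
      rw [if_pos (by simp)]
    rw [Finset.sum_congr rfl hin]
    have : ∀ i, (if i = 0 then (1:ℝ) else 0) * (y i * y 0) = if i = 0 then y i * y 0 else 0 := by
      intro i
      split_ifs <;> ring
    simp only [this]
    rw [Finset.sum_ite_eq' (range (k+1)) 0 (fun i => y i * y 0)]
    rw [if_pos (by simp)]

lemma bmE_decomp (s t : ℝ) (i j : ℕ) :
    bmE s t i j = (1+2*t) * (if i = j then (1:ℝ) else 0)
      + (-t) * (if i+1 = j then (1:ℝ) else 0) + (-t) * (if j+1 = i then (1:ℝ) else 0)
      + (s-t) * ((if i = 0 then (1:ℝ) else 0) * (if j = 0 then (1:ℝ) else 0)) := by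
  unfold bmE
  split_ifs <;>
    first
      | ring1
      | (exfalso; (try simp only [or_false, false_or, not_true, not_false_iff] at *);
         all_goals omega)

lemma buE_decomp (t : ℝ) (i j : ℕ) :
    buE t i j = (1+2*t) * (if i = j then (1:ℝ) else 0)
      + (-t) * (if i+1 = j then (1:ℝ) else 0) + (-t) * (if j+1 = i then (1:ℝ) else 0) := by
  unfold buE
  split_ifs <;>
    first
      | ring1
      | (exfalso; (try simp only [or_false, false_or, not_true, not_false_iff] at *);
         all_goals omega)

lemma qf_Bm (s t : ℝ) (n : ℕ) (x : Fin n → ℝ) :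
    dotProduct x ((Bm s t n) *ᵥ x)
      = (1+2*t) * (∑ j ∈ range n, (pad x j)^2)
        - 2*t * (∑ j ∈ range n, pad x j * pad x (j+1))
        + (s-t) * (pad x 0)^2 := by
  have hy : ∀ j, n ≤ j → pad x j = 0 := fun j h => pad_ge x h
  rw [show Bm s t n = Matrix.of (fun i j : Fin n => bmE s t i.1 j.1) from rfl, dot_eq]
  have hterm : ∀ i j : ℕ, bmE s t i j * (pad x i * pad x j)
      = (1+2*t) * ((if i = j then (1:ℝ) else 0) * (pad x i * pad x j))
        + (-t) * ((if i+1 = j then (1:ℝ) else 0) * (pad x i * pad x j))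
        + (-t) * ((if j+1 = i then (1:ℝ) else 0) * (pad x i * pad x j))
        + (s-t) * (((if i = 0 then (1:ℝ) else 0) * (if j = 0 then (1:ℝ) else 0)) * (pad x i * pad x j)) := by
    intro i j
    rw [bmE_decomp]
    ring
  simp only [hterm]
  simp only [Finset.sum_add_distrib, ← Finset.mul_sum]
  rw [sum_delta_diag n (fun a b => pad x a * pad x b), sum_delta_shift n (pad x) hy,
      sum_delta_shift' n (pad x) hy, sum_corner n (pad x) hy]
  have : ∀ j ∈ range n, pad x j * pad x j = (pad x j)^2 := fun j _ => (sq (pad x j)) ▸ by ring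
  rw [Finset.sum_congr rfl this]
  ring

lemma qf_Bu (t : ℝ) (m : ℕ) (x : Fin m → ℝ) :
    dotProduct x ((Bu t m) *ᵥ x)
      = (1+2*t) * (∑ j ∈ range m, (pad x j)^2)
        - 2*t * (∑ j ∈ range m, pad x j * pad x (j+1)) := by
  have hy : ∀ j, m ≤ j → pad x j = 0 := fun j h => pad_ge x h
  rw [show Bu t m = Matrix.of (fun i j : Fin m => buE t i.1 j.1) from rfl, dot_eq]
  have hterm : ∀ i j : ℕ, buE t i j * (pad x i * pad x j)
      = (1+2*t) * ((if i = j then (1:ℝ) else 0) * (pad x i * pad x j))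
        + (-t) * ((if i+1 = j then (1:ℝ) else 0) * (pad x i * pad x j))
        + (-t) * ((if j+1 = i then (1:ℝ) else 0) * (pad x i * pad x j)) := by
    intro i j
    rw [buE_decomp]
    ring
  simp only [hterm]
  simp only [Finset.sum_add_distrib, ← Finset.mul_sum]
  rw [sum_delta_diag m (fun a b => pad x a * pad x b), sum_delta_shift m (pad x) hy,
      sum_delta_shift' m (pad x) hy]
  have : ∀ j ∈ range m, pad x j * pad x j = (pad x j)^2 := fun j _ => (sq (pad x j)) ▸ by ring
  rw [Finset.sum_congr rfl this]
  ring


/-! ### Discrete Wirtinger inequality -/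

lemma trig_rec (θ x : ℝ) :
    Real.sin ((x+2)*θ) = 2*Real.cos θ*Real.sin ((x+1)*θ) - Real.sin (x*θ) := by
  have h1 := Real.sin_add ((x+1)*θ) θ
  have h2 := Real.sin_sub ((x+1)*θ) θ
  have e1 : (x+2)*θ = (x+1)*θ + θ := by ring
  have e2 : x*θ = (x+1)*θ - θ := by ring
  rw [e1, h1, e2, h2]
  ring

lemma qsum_nonneg (m : ℕ) (y : ℕ → ℝ) (hy : ∀ j, m ≤ j → y j = 0) :
    0 ≤ 2 * (∑ j ∈ range m, (y j)^2) - 2 * (∑ j ∈ range m, y j * y (j+1)) := by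
  have hshift : ∑ j ∈ range m, (y (j+1))^2 = (∑ j ∈ range m, (y j)^2) - (y 0)^2 := by
    have h1 : ∑ j ∈ range (m+1), (y j)^2 = (∑ j ∈ range m, (y (j+1))^2) + (y 0)^2 :=
      Finset.sum_range_succ' (fun j => (y j)^2) m
    have h2 : ∑ j ∈ range (m+1), (y j)^2 = (∑ j ∈ range m, (y j)^2) + (y m)^2 :=
      Finset.sum_range_succ (fun j => (y j)^2) m
    rw [hy m (le_refl m)] at h2
    rw [h2] at h1
    linarith
  have hexp : ∑ j ∈ range m, (y j - y (j+1))^2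
      = (∑ j ∈ range m, (y j)^2) - 2 * (∑ j ∈ range m, y j * y (j+1))
        + (∑ j ∈ range m, (y (j+1))^2) := by
    rw [Finset.mul_sum, ← Finset.sum_sub_distrib, ← Finset.sum_add_distrib]
    refine Finset.sum_congr rfl fun j _ => ?_
    ring
  have hsq : 0 ≤ ∑ j ∈ range m, (y j - y (j+1))^2 :=
    Finset.sum_nonneg fun j _ => sq_nonneg _
  nlinarith [sq_nonneg (y 0)]

lemma wirtinger (m : ℕ) (hm : 1 ≤ m) (y : ℕ → ℝ) (hy : ∀ j, m ≤ j → y j = 0) :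
    -2 * (∑ j ∈ range m, y j * y (j+1))
      ≤ (2 * Real.cos (π / ((m:ℝ)+1))) * ∑ j ∈ range m, (y j)^2 := by
  obtain ⟨k, rfl⟩ : ∃ k, m = k + 1 := ⟨m - 1, by omega⟩
  push_cast
  set θ : ℝ := π / ((k:ℝ)+1+1) with hθdef
  have hθpos : 0 < θ := by
    apply div_pos Real.pi_pos
    positivity
  have hθlt : θ ≤ π/2 := by
    rw [hθdef]
    apply div_le_div_of_nonneg_left Real.pi_pos.le (by norm_num)
    push_cast
    linarith [Nat.cast_nonneg (α := ℝ) k]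
  have hcos : 0 ≤ Real.cos θ := Real.cos_nonneg_of_mem_Icc ⟨by linarith, hθlt⟩
  -- sin positivity for indices 1..k+1
  have hsinpos : ∀ j : ℕ, 0 < j → j ≤ k+1 → 0 < Real.sin ((j:ℝ)*θ) := by
    intro j hj0 hjk
    apply Real.sin_pos_of_pos_of_lt_pi
    · have : (0:ℝ) < (j:ℝ) := by exact_mod_cast hj0
      positivity
    · have hj : (j:ℝ) < (k:ℝ)+1+1 := by
        push_cast
        exact_mod_cast (by omega : j < k+2)
      calc (j:ℝ)*θ < ((k:ℝ)+1+1)*θ := by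
            apply mul_lt_mul_of_pos_right hj hθpos
        _ = π := by
            rw [hθdef]
            field_simp
  set b : ℕ → ℝ := fun j => Real.sin ((j:ℝ)*θ) / Real.sin (((j:ℝ)+1)*θ) with hbdef
  have hb0 : b 0 = 0 := by
    simp [hbdef]
  -- drop the last (zero) term
  have hdrop : ∑ j ∈ range (k+1), y j * y (j+1) = ∑ j ∈ range k, y j * y (j+1) := by
    rw [Finset.sum_range_succ, hy (k+1) (le_refl _), mul_zero, add_zero]
  rw [hdrop]
  -- pointwise bound
  have hpt : ∀ j ∈ range k, -2 * (y j * y (j+1))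
      ≤ 2*Real.cos θ * (y j)^2 + (b (j+1) * (y (j+1))^2 - b j * (y j)^2) := by
    intro j hj
    rw [Finset.mem_range] at hj
    have hs1 : 0 < Real.sin (((j:ℝ)+1)*θ) := by
      have := hsinpos (j+1) (by omega) (by omega)
      push_cast at this
      exact this
    have hs2 : 0 < Real.sin (((j:ℝ)+2)*θ) := by
      have := hsinpos (j+2) (by omega) (by omega)
      push_cast at this
      exact this
    have ha : 2*Real.cos θ - b j = Real.sin (((j:ℝ)+2)*θ) / Real.sin (((j:ℝ)+1)*θ) := by
      rw [hbdef]
      rw [trig_rec θ (j:ℝ)]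
      have hs1' : Real.sin (θ * ((j:ℝ)+1)) ≠ 0 := by rw [mul_comm]; exact hs1.ne'
      field_simp
    have hb1 : b (j+1) = Real.sin (((j:ℝ)+1)*θ) / Real.sin (((j:ℝ)+2)*θ) := by
      rw [hbdef]
      push_cast
      rw [show ((j:ℝ)+1+1) = ((j:ℝ)+2) by ring]
    have key : -2 * (y j * y (j+1))
        ≤ (2*Real.cos θ - b j) * (y j)^2 + b (j+1) * (y (j+1))^2 := by
      rw [ha, hb1, div_mul_eq_mul_div, div_mul_eq_mul_div,
        div_add_div _ _ (ne_of_gt hs1) (ne_of_gt hs2), le_div_iff₀ (mul_pos hs1 hs2)]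
      nlinarith [sq_nonneg (Real.sin (((j:ℝ)+2)*θ) * y j + Real.sin (((j:ℝ)+1)*θ) * y (j+1))]
    nlinarith [key]
  have hsum : ∑ j ∈ range k, (-2 * (y j * y (j+1)))
      ≤ ∑ j ∈ range k, (2*Real.cos θ * (y j)^2 + (b (j+1) * (y (j+1))^2 - b j * (y j)^2)) :=
    Finset.sum_le_sum hpt
  rw [← Finset.mul_sum] at hsum
  rw [Finset.sum_add_distrib, ← Finset.mul_sum,
    Finset.sum_range_sub (fun j => b j * (y j)^2) k, hb0, zero_mul, sub_zero] at hsum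
  have hsinθ : 0 < Real.sin θ := by
    apply Real.sin_pos_of_pos_of_lt_pi hθpos
    exact lt_of_le_of_lt hθlt (half_lt_self Real.pi_pos)
  have hbk : b k = 2*Real.cos θ := by
    have hm1 : ((k:ℝ)+1)*θ = π - θ := by
      rw [hθdef]
      field_simp
      ring
    have hk2 : (k:ℝ)*θ = π - 2*θ := by
      rw [hθdef]
      field_simp
      ring
    rw [hbdef]
    show Real.sin ((k:ℝ)*θ) / Real.sin (((k:ℝ)+1)*θ) = 2*Real.cos θ
    rw [hm1, hk2, Real.sin_pi_sub, Real.sin_pi_sub, Real.sin_two_mul]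
    field_simp
  rw [hbk] at hsum
  rw [Finset.sum_range_succ (fun j => (y j)^2) k, mul_add]
  linarith

/-! ### Positive definiteness of the uniform tridiagonal block -/

lemma cos_pi_div_nonneg (n : ℕ) (hn : 2 ≤ n) : 0 ≤ Real.cos (π/(n:ℝ)) := by
  apply Real.cos_nonneg_of_mem_Icc
  constructor
  · have : 0 < π/(n:ℝ) := div_pos Real.pi_pos (by exact_mod_cast (by omega : 0 < n))
    linarith [Real.pi_pos]
  · apply div_le_div_of_nonneg_left Real.pi_pos.le (by norm_num)
    exact_mod_cast hn

lemma lam_pos (n : ℕ) (hn : 2 ≤ n) : 0 < 2 + 2*Real.cos (π/(n:ℝ)) := by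
  have := cos_pi_div_nonneg n hn
  linarith

lemma sumsq_pos {m : ℕ} (x : Fin m → ℝ) (hx : x ≠ 0) :
    0 < ∑ j ∈ range m, (pad x j)^2 := by
  obtain ⟨i, hxi⟩ := Function.ne_iff.mp hx
  refine Finset.sum_pos' (fun j _ => sq_nonneg _) ⟨i.1, Finset.mem_range.mpr i.isLt, ?_⟩
  rw [pad_val]
  exact pow_two_pos_of_ne_zero hxi

lemma star_eq_self {m : ℕ} (x : Fin m → ℝ) : star x = x := by
  ext i
  simp

lemma posdef_Bu (t : ℝ) (n : ℕ) (hn : 2 ≤ n)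
    (ht : -1 / (2 + 2*Real.cos (π/(n:ℝ))) < t) :
    (Bu t (n-1)).PosDef := by
  have hlam := lam_pos n hn
  have htl : -1 < t * (2 + 2*Real.cos (π/(n:ℝ))) := by
    rw [div_lt_iff₀ hlam] at ht
    linarith
  rw [Matrix.posDef_iff_dotProduct_mulVec]
  constructor
  · show (Bu t (n-1))ᴴ = Bu t (n-1)
    ext i j
    show star (Bu t (n-1) j i) = Bu t (n-1) i j
    rw [star_trivial]
    show buE t j.1 i.1 = buE t i.1 j.1
    unfold buE
    split_ifs <;>
      first
        | ring1
        | (exfalso; (try simp only [or_false, false_or, not_true, not_false_iff] at *);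
           all_goals omega)
  · intro x hx
    rw [star_eq_self, qf_Bu]
    set N2 := ∑ j ∈ range (n-1), (pad x j)^2 with hN2def
    set AS := ∑ j ∈ range (n-1), pad x j * pad x (j+1) with hASdef
    have hN2 : 0 < N2 := sumsq_pos x hx
    have hQ0 : 0 ≤ 2*N2 - 2*AS := qsum_nonneg (n-1) (pad x) (fun j h => pad_ge x h)
    rcases le_or_gt 0 t with ht0 | ht0
    · nlinarith [mul_nonneg ht0 hQ0]
    · -- t < 0 : use Wirtinger
      have hm1 : 1 ≤ n - 1 := by omega
      have hcast : ((n-1:ℕ):ℝ) + 1 = (n:ℝ) := by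
        have : (1:ℝ) ≤ (n:ℝ) := by exact_mod_cast (by omega : 1 ≤ n)
        rw [Nat.cast_sub (by omega : 1 ≤ n)]
        ring
      have hW := wirtinger (n-1) hm1 (pad x) (fun j h => pad_ge x h)
      rw [hcast] at hW
      -- hW : -2 * AS ≤ 2 cos * N2
      have hWle : 2*N2 - 2*AS ≤ (2 + 2*Real.cos (π/(n:ℝ))) * N2 := by
        rw [← hN2def, ← hASdef] at hW
        nlinarith [hW]
      have hmul : t * ((2 + 2*Real.cos (π/(n:ℝ))) * N2) ≤ t * (2*N2 - 2*AS) :=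
        mul_le_mul_of_nonpos_left hWle (le_of_lt ht0)
      nlinarith [mul_pos (show (0:ℝ) < 1 + t*(2 + 2*Real.cos (π/(n:ℝ))) by linarith) hN2]

/-! ### Necessity of the t-condition -/

lemma t_gt_of_posSemidef (s t : ℝ) (n : ℕ) (hn : 2 ≤ n)
    (hB : (Bm s t n).PosSemidef) :
    -1 / (2 + 2*Real.cos (π/(n:ℝ))) < t := by
  obtain ⟨m, rfl⟩ : ∃ m, n = m + 2 := ⟨n - 2, by omega⟩
  set θ : ℝ := π/((m+2 : ℕ):ℝ) with hθdef
  set c : ℝ := Real.cos θ with hcdef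
  have hlam : 0 < 2 + 2*c := lam_pos (m+2) (by omega)
  by_contra hcon
  push_neg at hcon
  have htl : t * (2+2*c) ≤ -1 := by
    rw [le_div_iff₀ hlam] at hcon
    linarith
  have ht0 : t ≠ 0 := by
    intro h
    rw [h] at htl
    norm_num at htl
  have hθpos : 0 < θ := div_pos Real.pi_pos (by positivity)
  have hθltpi : θ < π := by
    rw [hθdef]
    rw [div_lt_iff₀ (by positivity)]
    have h2 : (2:ℝ) ≤ ((m+2:ℕ):ℝ) := by exact_mod_cast (by omega : 2 ≤ m+2)
    have h3 : π * 2 ≤ π * ((m+2:ℕ):ℝ) := mul_le_mul_of_nonneg_left h2 Real.pi_pos.le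
    linarith [Real.pi_pos]
  have hsinθ : 0 < Real.sin θ := Real.sin_pos_of_pos_of_lt_pi hθpos hθltpi
  set v : ℕ → ℝ := fun j => (-1)^j * Real.sin ((j:ℝ)*θ) with hvdef
  have hv0 : v 0 = 0 := by simp [hvdef]
  have hvn : v (m+2) = 0 := by
    have : ((m+2:ℕ):ℝ) * θ = π := by
      rw [hθdef]
      field_simp
    rw [hvdef]
    simp only [this]
    simp [Real.sin_pi]
  have heigen : ∀ j : ℕ, 2*v (j+1) - v j - v (j+2) = (2+2*c) * v (j+1) := by
    intro j
    rw [hvdef]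
    simp only
    push_cast
    rw [show ((j:ℝ)+2)*θ = (((j:ℝ))+2)*θ from rfl, trig_rec θ (j:ℝ)]
    rw [pow_add, pow_add]
    rw [hcdef]
    ring
  set W := ∑ j ∈ range (m+1), (v (j+1))^2 with hWdef
  set R := ∑ j ∈ range (m+1), v (j+1) * v (j+2) with hRdef
  have hWpos : 0 < W := by
    refine Finset.sum_pos' (fun j _ => sq_nonneg _) ⟨0, Finset.mem_range.mpr (by omega), ?_⟩
    have : v 1 = -Real.sin θ := by
      rw [hvdef]
      push_cast
      simp
    rw [this, neg_sq]
    exact pow_two_pos_of_ne_zero hsinθ.ne'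
  have hshift : ∑ j ∈ range (m+1), v j * v (j+1) = R := by
    have h1 : ∑ j ∈ range (m+1), v j * v (j+1)
        = (∑ j ∈ range m, v (j+1) * v (j+2)) + v 0 * v 1 :=
      Finset.sum_range_succ' (fun j => v j * v (j+1)) m
    have h2 : R = (∑ j ∈ range m, v (j+1) * v (j+2)) + v (m+1) * v (m+2) :=
      Finset.sum_range_succ (fun j => v (j+1) * v (j+2)) m
    rw [h1, h2, hv0, hvn]
    ring
  have heig2 : 2*W - 2*R = (2+2*c)*W := by
    have h1 : ∑ j ∈ range (m+1), v (j+1) * (2*v (j+1) - v j - v (j+2))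
        = 2*W - (∑ j ∈ range (m+1), v j * v (j+1)) - R := by
      rw [hWdef, hRdef, Finset.mul_sum, ← Finset.sum_sub_distrib, ← Finset.sum_sub_distrib]
      refine Finset.sum_congr rfl fun j _ => ?_
      ring
    have h2 : ∑ j ∈ range (m+1), v (j+1) * (2*v (j+1) - v j - v (j+2))
        = (2+2*c)*W := by
      rw [hWdef, Finset.mul_sum]
      refine Finset.sum_congr rfl fun j _ => ?_
      rw [heigen j]
      ring
    rw [hshift] at h1
    rw [h2] at h1
    linarith
  -- the test vector
  set X : ℝ → (Fin (m+2) → ℝ) := fun z => fun i => if i.1 = 0 then z else v i.1 with hXdef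
  have hpad0 : ∀ z, pad (X z) 0 = z := by
    intro z
    unfold pad
    rw [dif_pos (by omega : 0 < m+2)]
    simp [hXdef]
  have hpads : ∀ z, ∀ j : ℕ, j ∈ range (m+1) → pad (X z) (j+1) = v (j+1) := by
    intro z j hj
    rw [Finset.mem_range] at hj
    unfold pad
    rw [dif_pos (by omega : j+1 < m+2)]
    simp [hXdef]
  have hpads2 : ∀ z, ∀ j : ℕ, j ∈ range (m+1) → pad (X z) (j+2) = v (j+2) := by
    intro z j hj
    rw [Finset.mem_range] at hj
    by_cases h : j + 2 < m + 2
    · unfold pad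
      rw [dif_pos h]
      simp [hXdef]
    · have hj2 : j + 2 = m + 2 := by omega
      rw [hj2, hvn, pad_ge (X _) (le_refl _)]
  have hqf : ∀ z, dotProduct (X z) ((Bm s t (m+2)) *ᵥ (X z))
      = (1+s+t)*(z*z) + (-2*t*(v 1))*z + (1+t*(2+2*c))*W := by
    intro z
    rw [qf_Bm]
    have e1 : ∑ j ∈ range (m+2), (pad (X z) j)^2 = z^2 + W := by
      rw [Finset.sum_range_succ' (fun j => (pad (X z) j)^2) (m+1), hpad0]
      rw [Finset.sum_congr rfl (fun j hj => by rw [hpads z j hj])]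
      rw [hWdef]
      ring
    have e2 : ∑ j ∈ range (m+2), pad (X z) j * pad (X z) (j+1) = z * v 1 + R := by
      rw [Finset.sum_range_succ' (fun j => pad (X z) j * pad (X z) (j+1)) (m+1), hpad0]
      rw [Finset.sum_congr rfl (fun j hj => by rw [hpads z j hj, hpads2 z j hj])]
      rw [hRdef]
      have : pad (X z) 1 = v 1 := hpads z 0 (Finset.mem_range.mpr (by omega))
      rw [this]
      ring
    rw [e1, e2, hpad0]
    linear_combination t * heig2
  have hP : ∀ z : ℝ, 0 ≤ (1+s+t)*(z*z) + (-2*t*(v 1))*z + (1+t*(2+2*c))*W := by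
    intro z
    have := (Matrix.posSemidef_iff_dotProduct_mulVec.mp hB).2 (X z)
    rw [star_eq_self, hqf z] at this
    exact this
  have hγ : (1+t*(2+2*c))*W ≤ 0 :=
    mul_nonpos_of_nonpos_of_nonneg (by linarith) (le_of_lt hWpos)
  rcases lt_or_eq_of_le hγ with hlt | heq
  · have := hP 0
    nlinarith
  · have hβ : -2*t*(v 1) ≠ 0 := by
      have hv1 : v 1 = -Real.sin θ := by
        rw [hvdef]
        push_cast
        simp
      rw [hv1]
      intro h
      have : t * Real.sin θ = 0 := by linarith [h]
      rcases mul_eq_zero.mp this with h' | h'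
      · exact ht0 h'
      · exact hsinθ.ne' h'
    have hdis := discrim_le_zero (a := 1+s+t) (b := -2*t*(v 1)) (c := (1+t*(2+2*c))*W)
      (fun z => hP z)
    rw [discrim] at hdis
    rw [heq] at hdis
    nlinarith [pow_two_pos_of_ne_zero hβ]

/-! ### Schur complement reduction -/

lemma psd_fin_one (M : Matrix (Fin 1) (Fin 1) ℝ) : M.PosSemidef ↔ 0 ≤ M 0 0 := by
  constructor
  · intro h
    have := (Matrix.posSemidef_iff_dotProduct_mulVec.mp h).2 (fun _ => 1)
    simpa [Matrix.mulVec, dotProduct, Fin.sum_univ_one] using this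
  · intro h
    refine Matrix.posSemidef_iff_dotProduct_mulVec.mpr ⟨?_, fun x => ?_⟩
    · ext i j
      fin_cases i
      fin_cases j
      simp [Matrix.conjTranspose_apply]
    · have he : dotProduct (star x) (M *ᵥ x) = M 0 0 * (x 0 * x 0) := by
        simp [Matrix.mulVec, dotProduct, Fin.sum_univ_one]
        ring
      rw [he]
      exact mul_nonneg h (mul_self_nonneg _)

lemma posSemidef_Bm_iff_det (s t : ℝ) (n : ℕ) (hn : 2 ≤ n)
    (hD : (Bu t (n-1)).PosDef) :
    ((Bm s t n).PosSemidef ↔ 0 ≤ (Bm s t n).det) := by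
  obtain ⟨m, rfl⟩ : ∃ m, n = m + 2 := ⟨n - 2, by omega⟩
  have hD' : (Bu t (m+1)).PosDef := hD
  haveI : Invertible (Bu t (m+1)) := Matrix.invertibleOfIsUnitDet _ hD'.det_pos.ne'.isUnit
  set A₁ : Matrix (Fin 1) (Fin 1) ℝ := Matrix.of fun _ _ => 1+s+t with hA₁
  set B₁ : Matrix (Fin 1) (Fin (m+1)) ℝ := Matrix.of fun _ j => bmE s t 0 (j.1+1) with hB₁
  have hc : m + 2 = 1 + (m+1) := by omega
  set e : Fin (m+2) ≃ Fin 1 ⊕ Fin (m+1) := (finCongr hc).trans finSumFinEquiv.symm with he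
  have hkey : ∀ i : Fin (m+2),
      e i = if h : i.1 = 0 then Sum.inl 0 else Sum.inr ⟨i.1-1, by omega⟩ := by
    intro i
    rw [he, Equiv.trans_apply, Equiv.symm_apply_eq]
    by_cases h : i.1 = 0
    · rw [dif_pos h, finSumFinEquiv_apply_left]
      apply Fin.ext
      simp [h]
    · rw [dif_neg h, finSumFinEquiv_apply_right]
      apply Fin.ext
      simp
      omega
  have hblk : Bm s t (m+2) = (fromBlocks A₁ B₁ B₁ᴴ (Bu t (m+1))).submatrix e e := by
    ext i j
    rw [Matrix.submatrix_apply, hkey i, hkey j]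
    by_cases hi : i.1 = 0 <;> by_cases hj : j.1 = 0
    · rw [dif_pos hi, dif_pos hj]
      rw [Matrix.fromBlocks_apply₁₁]
      show bmE s t i.1 j.1 = _
      rw [hi, hj, hA₁]
      show bmE s t 0 0 = 1+s+t
      unfold bmE
      norm_num
    · rw [dif_pos hi, dif_neg hj]
      rw [Matrix.fromBlocks_apply₁₂]
      show bmE s t i.1 j.1 = bmE s t 0 (j.1 - 1 + 1)
      rw [hi, (by omega : j.1 - 1 + 1 = j.1)]
    · rw [dif_neg hi, dif_pos hj]
      rw [Matrix.fromBlocks_apply₂₁]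
      show bmE s t i.1 j.1 = star (bmE s t 0 (i.1 - 1 + 1))
      rw [star_trivial, (by omega : i.1 - 1 + 1 = i.1), hj]
      exact bmE_symm s t i.1 0
    · rw [dif_neg hi, dif_neg hj]
      rw [Matrix.fromBlocks_apply₂₂]
      show bmE s t i.1 j.1 = buE t (i.1 - 1) (j.1 - 1)
      rw [← bmE_succ_succ s t (i.1-1) (j.1-1),
        (by omega : i.1 - 1 + 1 = i.1), (by omega : j.1 - 1 + 1 = j.1)]
  have hpsd : (Bm s t (m+2)).PosSemidef
      ↔ (fromBlocks A₁ B₁ B₁ᴴ (Bu t (m+1))).PosSemidef := by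
    rw [hblk]
    exact Matrix.posSemidef_submatrix_equiv e
  have hdet : (Bm s t (m+2)).det
      = (Bu t (m+1)).det * (A₁ - B₁ * ⅟(Bu t (m+1)) * B₁ᴴ).det := by
    rw [hblk, Matrix.det_submatrix_equiv_self, Matrix.det_fromBlocks₂₂]
  have hschur := Matrix.PosDef.fromBlocks₂₂ A₁ B₁ hD'
  set N := A₁ - B₁ * (Bu t (m+1))⁻¹ * B₁ᴴ with hN
  have hNN : A₁ - B₁ * ⅟(Bu t (m+1)) * B₁ᴴ = N := by
    rw [hN, Matrix.invOf_eq_nonsing_inv]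
  rw [hNN] at hdet
  have h11 : N.PosSemidef ↔ 0 ≤ N 0 0 := psd_fin_one N
  have hdetN : N.det = N 0 0 := Matrix.det_fin_one N
  rw [hpsd, hschur, h11, hdet, ← hdetN]
  constructor
  · intro h
    exact mul_nonneg hD'.det_pos.le h
  · intro h
    exact nonneg_of_mul_nonneg_right h hD'.det_pos

end AposAux

/-- For `n ≥ 2`, `Aₙ(s,t)` is positive semidefinite iff
`t > -1/(2 + 2 cos(π/n))` and `Sₙ(1,s+1;t) ≥ 0`. -/
theorem A_posSemidef_iff (s t : ℝ) (n : ℕ) (hn : 2 ≤ n) :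
    (A n s t).PosSemidef ↔
      t > -1 / (2 + 2 * Real.cos (π / n)) ∧ S 1 (s + 1) t n ≥ 0 := by
  have hcong := AposAux.posSemidef_A_iff_Bm s t n
  constructor
  · intro hA
    have hB := hcong.mp hA
    have ht := AposAux.t_gt_of_posSemidef s t n hn hB
    have hD := AposAux.posdef_Bu t n hn ht
    have hdet := (AposAux.posSemidef_Bm_iff_det s t n hn hD).mp hB
    rw [AposAux.detBm] at hdet
    exact ⟨ht, hdet⟩
  · rintro ⟨ht, hS⟩
    have hD := AposAux.posdef_Bu t n hn ht
    refine hcong.mpr ((AposAux.posSemidef_Bm_iff_det s t n hn hD).mpr ?_)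
    rw [AposAux.detBm]
    exact hS
end

section
/- For every integer n ≥ 1 and every real t, the n×n real symmetric matrix A_n(t,t) with (i,j) entry min{i,j} + t + t·δ_{ij} (indices 1,…,n) is positive semidefinite if and only if t ≥ -1/(2 + 2·cos(π/(n+1))). -/
open Real

section Aux

open Finset


lemma sin_add_sin_eq (θ : ℝ) (k : ℕ) :
    Real.sin (k * θ) + Real.sin ((k + 2) * θ) = 2 * Real.cos θ * Real.sin ((k + 1) * θ) := by
  have h1 : (k : ℝ) * θ = ((k : ℝ) + 1) * θ - θ := by ring
  have h2 : ((k : ℝ) + 2) * θ = ((k : ℝ) + 1) * θ + θ := by ring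
  rw [h1, h2, Real.sin_sub, Real.sin_add]
  ring

lemma key_id (n : ℕ) (θ : ℝ) (hs : Real.sin ((n + 1) * θ) = 0) (w : ℕ → ℝ) :
    Real.cos θ * ∑ k ∈ range n, Real.sin ((k + 1) * θ) * w k
      = (1 / 2) * ∑ k ∈ range (n - 1), Real.sin ((k + 1) * θ) * w (k + 1)
        + (1 / 2) * ∑ k ∈ range (n - 1), Real.sin ((k + 2) * θ) * w k := by
  rcases Nat.eq_zero_or_pos n with h0 | h0
  · subst h0; simp
  obtain ⟨m, rfl⟩ : ∃ m, n = m + 1 := ⟨n - 1, by omega⟩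
  simp only [Nat.add_sub_cancel]
  rw [Finset.mul_sum]
  have expand : ∀ k ∈ range (m + 1),
      Real.cos θ * (Real.sin ((k + 1) * θ) * w k)
        = (1 / 2) * (Real.sin (k * θ) * w k) + (1 / 2) * (Real.sin ((k + 2) * θ) * w k) := by
    intro k _
    have h := sin_add_sin_eq θ k
    linear_combination (-(w k) / 2) * h
  rw [Finset.sum_congr rfl expand, Finset.sum_add_distrib]
  have hA : ∑ k ∈ range (m + 1), (1 / 2) * (Real.sin (k * θ) * w k)
      = ∑ k ∈ range m, (1 / 2) * (Real.sin ((k + 1) * θ) * w (k + 1)) := by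
    rw [Finset.sum_range_succ']
    push_cast
    simp
  have hB : ∑ k ∈ range (m + 1), (1 / 2) * (Real.sin ((k + 2) * θ) * w k)
      = ∑ k ∈ range m, (1 / 2) * (Real.sin ((k + 2) * θ) * w k) := by
    rw [Finset.sum_range_succ]
    have : Real.sin (((m : ℝ) + 2) * θ) = 0 := by
      have : ((m : ℝ) + 2) = ((m + 1 : ℕ) : ℝ) + 1 := by push_cast; ring
      rw [this, hs]
    rw [this]
    simp
  rw [hA, hB, Finset.mul_sum, Finset.mul_sum]

lemma sin_pos_aux (n : ℕ) (θ : ℝ) (hθ : θ = π / (n + 1)) (k : ℕ) (hk : k < n) :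
    0 < Real.sin ((k + 1) * θ) := by
  have hn1 : (0:ℝ) < (n:ℝ) + 1 := by positivity
  apply Real.sin_pos_of_pos_of_lt_pi
  · rw [hθ]; positivity
  · rw [hθ]
    have hklt : ((k:ℝ) + 1) < (n:ℝ) + 1 := by exact_mod_cast Nat.succ_lt_succ hk
    have hpos : 0 < π / ((n:ℝ) + 1) := by positivity
    calc ((k:ℝ) + 1) * (π / ((n:ℝ) + 1)) < ((n:ℝ) + 1) * (π / ((n:ℝ) + 1)) :=
          mul_lt_mul_of_pos_right hklt hpos
      _ = π := by field_simp

lemma cross_ineq (n : ℕ) (θ : ℝ) (hθ : θ = π / (n + 1)) (y : ℕ → ℝ) :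
    0 ≤ Real.cos θ * ∑ k ∈ range n, (y k)^2 + ∑ k ∈ range (n - 1), y k * y (k + 1) := by
  have hsin : ∀ k < n, 0 < Real.sin ((k + 1) * θ) := fun k hk => sin_pos_aux n θ hθ k hk
  have hs0 : Real.sin ((n + 1) * θ) = 0 := by
    have : ((n:ℝ) + 1) * θ = π := by rw [hθ]; field_simp
    rw [this, Real.sin_pi]
  have hkey := key_id n θ hs0 (fun k => (y k)^2 / Real.sin ((k + 1) * θ))
  have h1 : ∑ k ∈ range n, Real.sin ((k + 1) * θ) * ((y k)^2 / Real.sin ((k + 1) * θ))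
      = ∑ k ∈ range n, (y k)^2 := by
    refine Finset.sum_congr rfl fun k hk => ?_
    have := hsin k (Finset.mem_range.mp hk)
    field_simp
  rw [h1] at hkey
  push_cast at hkey
  rw [hkey]
  have : ∀ k ∈ range (n - 1),
      0 ≤ (1/2) * (Real.sin ((k+1)*θ) * ((y (k+1))^2 / Real.sin (((k:ℝ)+1+1)*θ)))
        + (1/2) * (Real.sin ((k+2)*θ) * ((y k)^2 / Real.sin ((k+1)*θ))) + y k * y (k+1) := by
    intro k hk
    have hcast : ((k:ℝ) + 1 + 1) = ((k:ℝ) + 2) := by ring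
    rw [hcast]
    have hk' := Finset.mem_range.mp hk
    have ha : 0 < Real.sin ((k + 1) * θ) := hsin k (by omega)
    have hb : 0 < Real.sin (((k:ℝ) + 2) * θ) := by
      have := hsin (k+1) (by omega)
      push_cast at this
      convert this using 3
      ring
    set a := Real.sin ((k + 1) * θ)
    set b := Real.sin (((k:ℝ) + 2) * θ)
    have key : (1/2) * (a * ((y (k+1))^2 / b)) + (1/2) * (b * ((y k)^2 / a)) + y k * y (k+1)
        = (b * y k + a * y (k+1))^2 / (2 * a * b) := by
      field_simp
      ring
    rw [key]
    positivity
  rw [Finset.mul_sum, Finset.mul_sum, ← Finset.sum_add_distrib, ← Finset.sum_add_distrib]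
  exact Finset.sum_nonneg this

lemma sin_id (n : ℕ) (θ : ℝ) (hs : Real.sin ((n + 1) * θ) = 0) :
    ∑ k ∈ range (n - 1), Real.sin ((k + 1) * θ) * Real.sin ((k + 2) * θ)
      = Real.cos θ * ∑ k ∈ range n, Real.sin ((k + 1) * θ) ^ 2 := by
  have hkey := key_id n θ hs (fun k => Real.sin ((k + 1) * θ))
  push_cast at hkey
  simp only [← sq] at hkey
  rw [hkey, Finset.mul_sum, Finset.mul_sum, ← Finset.sum_add_distrib]
  refine (Finset.sum_congr rfl fun k _ => ?_).symm
  have hcast : ((k:ℝ) + 1 + 1) = ((k:ℝ) + 2) := by ring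
  rw [hcast]
  ring

lemma expand_E (n : ℕ) (hn : 1 ≤ n) (y : ℕ → ℝ) (hy : y n = 0) :
    (y 0)^2 + ∑ k ∈ range n, (y k - y (k+1))^2
      = 2 * ∑ k ∈ range n, (y k)^2 - 2 * ∑ k ∈ range (n-1), y k * y (k+1) := by
  obtain ⟨m, rfl⟩ : ∃ m, n = m + 1 := ⟨n - 1, by omega⟩
  simp only [Nat.add_sub_cancel]
  have h1 : ∑ k ∈ range (m+1), (y k - y (k+1))^2
      = ∑ k ∈ range (m+1), ((y k)^2 + (y (k+1))^2 - 2 * (y k * y (k+1))) :=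
    Finset.sum_congr rfl fun k _ => by ring
  have h2 : ∑ k ∈ range (m+1), ((y k)^2 + (y (k+1))^2 - 2 * (y k * y (k+1)))
      = ∑ k ∈ range (m+1), (y k)^2 + ∑ k ∈ range (m+1), (y (k+1))^2
        - 2 * ∑ k ∈ range (m+1), y k * y (k+1) := by
    rw [Finset.sum_sub_distrib, Finset.sum_add_distrib, Finset.mul_sum]
  have h3 : ∑ k ∈ range (m+1), (y (k+1))^2 = ∑ k ∈ range (m+1), (y k)^2 - (y 0)^2 := by
    have := Finset.sum_range_succ' (fun k => (y k)^2) (m+1)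
    rw [Finset.sum_range_succ (fun k => (y (k+1))^2) m] at this ⊢
    have hlast : (y (m+1))^2 = 0 := by rw [hy]; ring
    rw [hlast] at this ⊢
    have this2 : ∑ k ∈ range (m+1+1), (y k)^2 = ∑ k ∈ range (m+1), (y k)^2 := by
      rw [Finset.sum_range_succ, hlast, add_zero]
    rw [this2] at this
    linarith [this]
  have h4 : ∑ k ∈ range (m+1), y k * y (k+1) = ∑ k ∈ range m, y k * y (k+1) := by
    rw [Finset.sum_range_succ, hy, mul_zero, add_zero]
  rw [h1, h2, h3, h4]
  ring

def xe (n : ℕ) (x : Fin n → ℝ) (k : ℕ) : ℝ := if h : k < n then x ⟨k, h⟩ else 0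

def Yv (n : ℕ) (x : Fin n → ℝ) (k : ℕ) : ℝ := ∑ i ∈ Finset.Ico k n, xe n x i

lemma Yv_zero (n : ℕ) (x : Fin n → ℝ) (k : ℕ) (hk : n ≤ k) : Yv n x k = 0 := by
  rw [Yv, Finset.Ico_eq_empty (by omega), Finset.sum_empty]

lemma Yv_sub (n : ℕ) (x : Fin n → ℝ) (k : ℕ) (hk : k < n) :
    Yv n x k - Yv n x (k+1) = xe n x k := by
  rw [Yv, Yv, Finset.sum_eq_sum_Ico_succ_bot hk]
  ring

lemma Yv_eq_indicator (n : ℕ) (x : Fin n → ℝ) (k : ℕ) :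
    Yv n x k = ∑ i ∈ range n, (if k ≤ i then (1:ℝ) else 0) * xe n x i := by
  rw [Yv]
  rw [show Finset.Ico k n = (range n).filter (fun i => k ≤ i) by
    ext a; simp [Finset.mem_filter, Finset.mem_Ico, Finset.mem_range]; omega]
  rw [Finset.sum_filter]
  exact Finset.sum_congr rfl fun i _ => by split <;> simp

lemma min_eq_sum (n i j : ℕ) (hi : i < n) (hj : j < n) :
    ((min (i + 1) (j + 1) : ℕ) : ℝ)
      = ∑ k ∈ range n, (if k ≤ i then (1:ℝ) else 0) * (if k ≤ j then 1 else 0) := by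
  have h : ∀ k, (if k ≤ i then (1:ℝ) else 0) * (if k ≤ j then 1 else 0)
      = if k < min (i+1) (j+1) then 1 else 0 := by
    intro k
    rcases lt_or_ge k (min (i+1) (j+1)) with h1 | h1
    · rw [if_pos h1, if_pos (by omega : k ≤ i), if_pos (by omega : k ≤ j), mul_one]
    · rw [if_neg (by omega : ¬ k < min (i+1) (j+1))]
      by_cases h2 : k ≤ i
      · rw [if_neg (by omega : ¬ k ≤ j), mul_zero]
      · rw [if_neg h2, zero_mul]
  simp_rw [h]
  rw [← Finset.sum_filter]
  rw [show (range n).filter (fun k => k < min (i+1) (j+1)) = range (min (i+1) (j+1)) by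
    ext a; simp [Finset.mem_filter, Finset.mem_range]; omega]
  simp

lemma quad_form (n : ℕ) (t : ℝ) (x : Fin n → ℝ) :
    dotProduct x ((A n t t).mulVec x)
      = ∑ k ∈ range n, (Yv n x k)^2 + t * (Yv n x 0)^2
        + t * ∑ k ∈ range n, (Yv n x k - Yv n x (k+1))^2 := by
  have hx : ∀ i : Fin n, x i = xe n x i.1 := fun i => by simp [xe]
  have h1 : dotProduct x ((A n t t).mulVec x)
      = ∑ i : Fin n, ∑ j : Fin n,
          xe n x i.1 * ((((min (i.1 + 1) (j.1 + 1) : ℕ) : ℝ) + t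
            + if i.1 = j.1 then t else 0) * xe n x j.1) := by
    simp only [dotProduct, Matrix.mulVec, A, Matrix.of_apply]
    refine Finset.sum_congr rfl fun i _ => ?_
    rw [Finset.mul_sum]
    refine Finset.sum_congr rfl fun j _ => ?_
    rw [← hx i, ← hx j]
    congr 2
    simp [Fin.ext_iff]
  rw [h1]
  have h2 : (∑ i : Fin n, ∑ j : Fin n,
        xe n x i.1 * ((((min (i.1 + 1) (j.1 + 1) : ℕ) : ℝ) + t
          + if i.1 = j.1 then t else 0) * xe n x j.1))
      = ∑ i ∈ range n, ∑ j ∈ range n,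
          xe n x i * ((((min (i + 1) (j + 1) : ℕ) : ℝ) + t
            + if i = j then t else 0) * xe n x j) := by
    rw [← Fin.sum_univ_eq_sum_range (fun i => ∑ j ∈ range n,
          xe n x i * ((((min (i + 1) (j + 1) : ℕ) : ℝ) + t
            + if i = j then t else 0) * xe n x j)) n]
    exact Finset.sum_congr rfl fun i _ =>
      (Fin.sum_univ_eq_sum_range (fun j =>
          xe n x i.1 * ((((min (i.1 + 1) (j + 1) : ℕ) : ℝ) + t
            + if i.1 = j then t else 0) * xe n x j)) n)
  rw [h2]
  have h3 : ∀ i ∈ range n, ∀ j ∈ range n,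
      xe n x i * ((((min (i + 1) (j + 1) : ℕ) : ℝ) + t
          + if i = j then t else 0) * xe n x j)
        = (∑ k ∈ range n, ((if k ≤ i then (1:ℝ) else 0) * xe n x i)
              * ((if k ≤ j then (1:ℝ) else 0) * xe n x j))
          + t * (xe n x i * xe n x j)
          + (if i = j then t * (xe n x i * xe n x j) else 0) := by
    intro i hi j hj
    rw [min_eq_sum n i j (Finset.mem_range.mp hi) (Finset.mem_range.mp hj)]
    have hsum : xe n x i * ((∑ k ∈ range n,
          (if k ≤ i then (1:ℝ) else 0) * (if k ≤ j then 1 else 0)) * xe n x j)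
        = ∑ k ∈ range n, ((if k ≤ i then (1:ℝ) else 0) * xe n x i)
            * ((if k ≤ j then (1:ℝ) else 0) * xe n x j) := by
      rw [Finset.sum_mul, Finset.mul_sum]
      exact Finset.sum_congr rfl fun k _ => by ring
    calc xe n x i * (((∑ k ∈ range n,
            (if k ≤ i then (1:ℝ) else 0) * (if k ≤ j then 1 else 0)) + t
            + if i = j then t else 0) * xe n x j)
        = xe n x i * ((∑ k ∈ range n,
            (if k ≤ i then (1:ℝ) else 0) * (if k ≤ j then 1 else 0)) * xe n x j)
          + t * (xe n x i * xe n x j)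
          + (if i = j then t * (xe n x i * xe n x j) else 0) := by
          split <;> ring
      _ = _ := by rw [hsum]
  rw [Finset.sum_congr rfl fun i hi => Finset.sum_congr rfl fun j hj => h3 i hi j hj]
  have hsplit : ∑ i ∈ range n, ∑ j ∈ range n,
      ((∑ k ∈ range n, ((if k ≤ i then (1:ℝ) else 0) * xe n x i)
          * ((if k ≤ j then (1:ℝ) else 0) * xe n x j))
        + t * (xe n x i * xe n x j)
        + (if i = j then t * (xe n x i * xe n x j) else 0))
      = (∑ i ∈ range n, ∑ j ∈ range n, ∑ k ∈ range n,
          ((if k ≤ i then (1:ℝ) else 0) * xe n x i)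
            * ((if k ≤ j then (1:ℝ) else 0) * xe n x j))
        + (∑ i ∈ range n, ∑ j ∈ range n, t * (xe n x i * xe n x j))
        + (∑ i ∈ range n, ∑ j ∈ range n,
            if i = j then t * (xe n x i * xe n x j) else 0) := by
    rw [← Finset.sum_add_distrib, ← Finset.sum_add_distrib]
    exact Finset.sum_congr rfl fun i _ => by
      rw [← Finset.sum_add_distrib, ← Finset.sum_add_distrib]
  rw [hsplit]
  have hP1 : (∑ i ∈ range n, ∑ j ∈ range n, ∑ k ∈ range n,
        ((if k ≤ i then (1:ℝ) else 0) * xe n x i)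
          * ((if k ≤ j then (1:ℝ) else 0) * xe n x j))
      = ∑ k ∈ range n, (Yv n x k)^2 := by
    calc (∑ i ∈ range n, ∑ j ∈ range n, ∑ k ∈ range n,
          ((if k ≤ i then (1:ℝ) else 0) * xe n x i)
            * ((if k ≤ j then (1:ℝ) else 0) * xe n x j))
        = ∑ i ∈ range n, ∑ k ∈ range n, ∑ j ∈ range n,
          ((if k ≤ i then (1:ℝ) else 0) * xe n x i)
            * ((if k ≤ j then (1:ℝ) else 0) * xe n x j) :=
          Finset.sum_congr rfl fun i _ => Finset.sum_comm
      _ = ∑ k ∈ range n, ∑ i ∈ range n, ∑ j ∈ range n,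
          ((if k ≤ i then (1:ℝ) else 0) * xe n x i)
            * ((if k ≤ j then (1:ℝ) else 0) * xe n x j) := Finset.sum_comm
      _ = ∑ k ∈ range n, (Yv n x k)^2 := by
          refine Finset.sum_congr rfl fun k _ => ?_
          rw [sq, Yv_eq_indicator, Finset.sum_mul_sum]
  have hP2 : (∑ i ∈ range n, ∑ j ∈ range n, t * (xe n x i * xe n x j))
      = t * (Yv n x 0)^2 := by
    have h0 : Yv n x 0 = ∑ i ∈ range n, xe n x i := by
      rw [Yv, Finset.range_eq_Ico]
    rw [h0, sq, Finset.sum_mul_sum, Finset.mul_sum]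
    refine Finset.sum_congr rfl fun i _ => ?_
    rw [Finset.mul_sum]
  have hP3 : (∑ i ∈ range n, ∑ j ∈ range n,
        if i = j then t * (xe n x i * xe n x j) else 0)
      = t * ∑ k ∈ range n, (Yv n x k - Yv n x (k+1))^2 := by
    rw [Finset.mul_sum]
    refine Finset.sum_congr rfl fun i hi => ?_
    rw [Finset.sum_ite_eq (range n) i (fun j => t * (xe n x i * xe n x j)), if_pos hi]
    rw [Yv_sub n x i (Finset.mem_range.mp hi)]
    ring
  rw [hP1, hP2, hP3]


end Aux

open Finset in
/-- `Aₙ(t,t)` is positive semidefinite iff `t ≥ -1/(2 + 2 cos(π/(n+1)))`. -/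
theorem A_t_t_posSemidef_iff (n : ℕ) (hn : 1 ≤ n) (t : ℝ) :
    (A n t t).PosSemidef ↔ t ≥ -1 / (2 + 2 * Real.cos (π / (n + 1))) := by
  set θ : ℝ := π / (n + 1) with hθdef
  have hθpos : 0 < θ := by rw [hθdef]; positivity
  have hle : θ ≤ π / 2 := by
    rw [hθdef]
    have h2 : (2:ℝ) ≤ (n:ℝ) + 1 := by
      have : (1:ℝ) ≤ (n:ℝ) := by exact_mod_cast hn
      linarith
    gcongr
  have hc0 : 0 ≤ Real.cos θ :=
    Real.cos_nonneg_of_mem_Icc ⟨by linarith [Real.pi_pos], hle⟩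
  have hden : 0 < 2 + 2 * Real.cos θ := by linarith
  have hs0 : Real.sin (((n:ℝ) + 1) * θ) = 0 := by
    have : ((n:ℝ) + 1) * θ = π := by rw [hθdef]; field_simp
    rw [this, Real.sin_pi]
  constructor
  · intro hPSD
    set y : ℕ → ℝ := fun k => (-1)^k * Real.sin ((k + 1) * θ) with hydef
    set x : Fin n → ℝ := fun i => y i.1 - y (i.1 + 1) with hxdef
    have hyn : y n = 0 := by
      have h : y n = (-1:ℝ)^n * Real.sin (((n:ℝ) + 1) * θ) := rfl
      rw [h, hs0, mul_zero]
    have hY : ∀ k, k ≤ n → Yv n x k = y k := by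
      intro k hk
      rw [Yv, Finset.sum_Ico_eq_sum_range]
      have hterm : ∀ i ∈ range (n - k), xe n x (k + i) = y (k + i) - y (k + (i + 1)) := by
        intro i hi
        have hlt : k + i < n := by
          have := Finset.mem_range.mp hi; omega
        rw [xe, dif_pos hlt, hxdef]
        show y (k + i) - y (k + i + 1) = y (k + i) - y (k + (i + 1))
        rw [Nat.add_assoc]
      rw [Finset.sum_congr rfl hterm,
        Finset.sum_range_sub' (fun i => y (k + i)) (n - k)]
      have h2 : k + (n - k) = n := by omega
      rw [add_zero, h2, hyn, sub_zero]
    have hq := quad_form n t x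
    have hyS : ∀ k, (y k)^2 = Real.sin (((k:ℝ) + 1) * θ)^2 := by
      intro k
      show ((-1:ℝ)^k * Real.sin (((k:ℝ) + 1) * θ))^2 = _
      have h1 : ((-1:ℝ)^k)^2 = 1 := by
        rw [← pow_mul, mul_comm, pow_mul]; norm_num
      rw [mul_pow, h1, one_mul]
    have hyC : ∀ k, y k * y (k + 1)
        = -(Real.sin (((k:ℝ) + 1) * θ) * Real.sin (((k:ℝ) + 2) * θ)) := by
      intro k
      have h2 : ((-1:ℝ))^k * ((-1:ℝ))^(k+1) = -1 := by
        rw [← pow_add]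
        exact Odd.neg_one_pow ⟨k, by omega⟩
      show (-1:ℝ)^k * Real.sin (((k:ℝ) + 1) * θ)
          * ((-1:ℝ)^(k+1) * Real.sin ((((k+1:ℕ):ℝ) + 1) * θ)) = _
      push_cast
      rw [show ((k:ℝ) + 1 + 1) = ((k:ℝ) + 2) from by ring]
      linear_combination (Real.sin (((k:ℝ)+1)*θ) * Real.sin (((k:ℝ)+2)*θ)) * h2
    set S := ∑ k ∈ range n, Real.sin (((k:ℝ) + 1) * θ)^2 with hSdef
    have hSpos : 0 < S := by
      rw [hSdef]
      apply Finset.sum_pos' (fun k _ => sq_nonneg _)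
      refine ⟨0, Finset.mem_range.mpr (by omega), ?_⟩
      have := sin_pos_aux n θ hθdef 0 (by omega)
      push_cast at this ⊢
      positivity
    have hval : dotProduct x ((A n t t).mulVec x)
        = (1 + (2 + 2 * Real.cos θ) * t) * S := by
      rw [hq]
      have e1 : ∑ k ∈ range n, (Yv n x k)^2 = S := by
        refine Finset.sum_congr rfl fun k hk => ?_
        rw [hY k (by have := Finset.mem_range.mp hk; omega), hyS]
      have e2 : (Yv n x 0)^2 = (y 0)^2 := by rw [hY 0 (by omega)]
      have e3 : ∑ k ∈ range n, (Yv n x k - Yv n x (k+1))^2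
          = ∑ k ∈ range n, (y k - y (k+1))^2 := by
        refine Finset.sum_congr rfl fun k hk => ?_
        have hk' := Finset.mem_range.mp hk
        rw [hY k (by omega), hY (k+1) (by omega)]
      have e4 : (y 0)^2 + ∑ k ∈ range n, (y k - y (k+1))^2
          = 2 * S - 2 * ∑ k ∈ range (n-1), y k * y (k+1) := by
        rw [expand_E n hn y hyn]
        congr 1
        rw [hSdef]
        congr 1
        exact Finset.sum_congr rfl fun k _ => hyS k
      have e5 : ∑ k ∈ range (n-1), y k * y (k+1) = -(Real.cos θ * S) := by
        rw [Finset.sum_congr rfl fun k _ => hyC k, Finset.sum_neg_distrib,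
          sin_id n θ hs0, ← hSdef]
      rw [e1, e2, e3]
      have e6 : t * (y 0 ^ 2) + t * ∑ k ∈ range n, (y k - y (k+1))^2
          = t * (2 * S + 2 * (Real.cos θ * S)) := by
        rw [← mul_add, e4, e5]; ring
      linear_combination e6
    have hx0 := hPSD.dotProduct_mulVec_nonneg x
    rw [star_trivial, hval] at hx0
    have h1 : 0 ≤ 1 + (2 + 2 * Real.cos θ) * t := by
      by_contra hcon
      push_neg at hcon
      nlinarith [hx0, mul_pos (neg_pos.mpr hcon) hSpos]
    rw [ge_iff_le, div_le_iff₀ hden]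
    linarith
  · intro ht
    have ht' : -1 ≤ t * (2 + 2 * Real.cos θ) := by
      rw [ge_iff_le, div_le_iff₀ hden] at ht
      linarith
    rw [Matrix.posSemidef_iff_dotProduct_mulVec]
    constructor
    · show Matrix.conjTranspose (A n t t) = A n t t
      ext i j
      simp only [A, Matrix.conjTranspose_apply, Matrix.of_apply, star_trivial]
      by_cases h : i = j
      · subst h; rfl
      · have h' : ¬ j = i := fun hh => h hh.symm
        rw [if_neg h, if_neg h', Nat.min_comm]
    · intro x
      rw [star_trivial, quad_form n t x]
      set y : ℕ → ℝ := fun k => Yv n x k with hydef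
      have hyn : y n = 0 := Yv_zero n x n le_rfl
      set S := ∑ k ∈ range n, (y k)^2 with hSdef
      have hS0 : 0 ≤ S := Finset.sum_nonneg fun k _ => sq_nonneg _
      have hE := expand_E n hn y hyn
      have hcross := cross_ineq n θ hθdef y
      have hEnn : 0 ≤ (y 0)^2 + ∑ k ∈ range n, (y k - y (k+1))^2 := by
        have := Finset.sum_nonneg (fun k (_ : k ∈ range n) => sq_nonneg (y k - y (k+1)))
        positivity
      rcases le_or_gt 0 t with htp | htn
      · have : 0 ≤ t * ((y 0)^2 + ∑ k ∈ range n, (y k - y (k+1))^2) :=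
          mul_nonneg htp hEnn
        nlinarith [hS0, this]
      · have hEle : (y 0)^2 + ∑ k ∈ range n, (y k - y (k+1))^2
            ≤ (2 + 2 * Real.cos θ) * S := by
          rw [hE]; nlinarith [hcross]
        nlinarith [mul_le_mul_of_nonpos_left hEle htn.le, hS0,
          mul_nonneg hS0 (by linarith : (0:ℝ) ≤ 1 + t * (2 + 2 * Real.cos θ))]
end

section
/- Let s, t ∈ ℝ. The following are equivalent: (i) for every n ≥ 1 and every x : {1,…,n} → ℝ one has ∑_{i=1}^{n} ∑_{j=1}^{n} (min{i,j} + s + t·δ_{ij})·x_i·x_j ≥ 0 (i.e. the infinite matrix A_∞(s,t) = [min{i,j} + s + t·δ_{ij}]_{i,j≥1} is positive semidefinite on finitely supported vectors); (ii) 1 + 4t ≥ 0 and 1 + 2s + √(1+4t) ≥ 0. -/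
open Finset

private lemma sos_identity (a b s : ℝ) (h : a^2 + b^2 = 1 + 2*(a*b)) (S : ℕ → ℝ) :
    ∀ n : ℕ, ∑ k ∈ range n, (S k)^2 + s * (S 0)^2
      + (a*b) * ∑ k ∈ range n, (S k - S (k+1))^2
    = (1 + s + a*b - b^2) * (S 0)^2 + ∑ k ∈ range n, (a * S (k+1) - b * S k)^2
      + (a*b - a^2) * (S n)^2 := by
  intro n
  induction n with
  | zero => simp; nlinarith [sq_nonneg (S 0)]
  | succ n ih =>
    rw [sum_range_succ, sum_range_succ, sum_range_succ]
    nlinarith [ih, sq_nonneg (S n), sq_nonneg (S (n+1))]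

private lemma sum_sq_formula : ∀ m : ℕ, ∑ k ∈ range m, ((k:ℝ))^2
    = (m:ℝ) * ((m:ℝ) - 1) * (2*(m:ℝ) - 1) / 6 := by
  intro m
  induction m with
  | zero => simp
  | succ m ih => rw [sum_range_succ, ih]; push_cast; ring

private lemma sum_odd_sq_formula : ∀ m : ℕ, ∑ k ∈ range m, (2*(k:ℝ)+1)^2
    = (4*(m:ℝ)^3 - (m:ℝ))/3 := by
  intro m
  induction m with
  | zero => simp
  | succ m ih => rw [sum_range_succ, ih]; push_cast; ring

private lemma min_as_sum (n : ℕ) (i j : Fin n) :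
    ((min (i.1 + 1) (j.1 + 1) : ℕ) : ℝ)
    = ∑ k ∈ range n, (if k ≤ i.1 then (1:ℝ) else 0) * (if k ≤ j.1 then (1:ℝ) else 0) := by
  have : ∀ k, (if k ≤ i.1 then (1:ℝ) else 0) * (if k ≤ j.1 then (1:ℝ) else 0)
      = if k ∈ range (min (i.1+1) (j.1+1)) then (1:ℝ) else 0 := by
    intro k; simp only [mem_range]; split_ifs <;> simp_all <;> omega
  rw [sum_congr rfl fun k _ => this k, sum_ite_mem]
  have hsub : range (min (i.1+1) (j.1+1)) ⊆ range n := by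
    intro k hk; simp only [mem_range] at *; have := i.2; have := j.2; omega
  rw [inter_comm, (inter_eq_left).2 hsub]
  simp

private lemma key_identity (s t : ℝ) (n : ℕ) (x : Fin n → ℝ) :
    ∑ i : Fin n, ∑ j : Fin n,
      (((min (i.1 + 1) (j.1 + 1) : ℕ) : ℝ) + s + if i = j then t else 0) * x i * x j
    = ∑ k ∈ range n, (∑ i : Fin n, if k ≤ i.1 then x i else 0)^2
      + s * (∑ i : Fin n, x i)^2 + t * ∑ i : Fin n, (x i)^2 := by
  have expand : ∀ i j : Fin n,
      (((min (i.1 + 1) (j.1 + 1) : ℕ) : ℝ) + s + if i = j then t else 0) * x i * x j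
      = (∑ k ∈ range n, ((if k ≤ i.1 then x i else 0) * (if k ≤ j.1 then x j else 0)))
        + s * (x i * x j) + (if i = j then t else 0) * (x i * x j) := by
    intro i j
    rw [min_as_sum n i j, add_mul, add_mul, add_mul, add_mul, sum_mul, sum_mul]
    congr 1
    · congr 1
      · apply sum_congr rfl
        intro k _
        split_ifs <;> ring
      · ring
    · ring
  rw [sum_congr rfl fun i _ => sum_congr rfl fun j _ => expand i j]
  simp only [sum_add_distrib]
  congr 1
  · congr 1
    · have swap : (∑ i : Fin n, ∑ j : Fin n, ∑ k ∈ range n,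
          ((if k ≤ i.1 then x i else 0) * (if k ≤ j.1 then x j else 0)))
          = ∑ k ∈ range n, ∑ i : Fin n, ∑ j : Fin n,
          ((if k ≤ i.1 then x i else 0) * (if k ≤ j.1 then x j else 0)) := by
        rw [sum_congr rfl fun i (_ : i ∈ (univ : Finset (Fin n))) =>
          sum_comm (s := (univ : Finset (Fin n))) (t := range n)
            (f := fun j k => (if k ≤ i.1 then x i else 0) * (if k ≤ j.1 then x j else 0))]
        exact sum_comm
      rw [swap]
      apply sum_congr rfl
      intro k _
      rw [sq, sum_mul_sum]
    · simp only [← mul_sum]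
      rw [← sum_mul, sq]
  · rw [mul_sum]
    apply sum_congr rfl
    intro i _
    simp only [ite_mul, zero_mul, sum_ite_eq, mem_univ, if_true]
    ring

private lemma partial_sum (n : ℕ) (S : ℕ → ℝ) (hS : S n = 0) (k : ℕ) (hk : k ≤ n) :
    ∑ i : Fin n, (if k ≤ i.1 then (S i.1 - S (i.1+1)) else 0) = S k := by
  rw [Fin.sum_univ_eq_sum_range (fun i => if k ≤ i then S i - S (i+1) else 0) n]
  rw [← sum_filter]
  have hf : (range n).filter (fun i => k ≤ i) = Ico k n := by
    ext i; simp [mem_range, mem_Ico]; omega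
  rw [hf, sum_Ico_eq_sub _ hk]
  rw [sum_range_sub' S, sum_range_sub' S]
  rw [hS]; ring

private lemma Q_of_S (s t : ℝ) (n : ℕ) (S : ℕ → ℝ) (hS : S n = 0) :
    ∑ i : Fin n, ∑ j : Fin n,
      (((min (i.1 + 1) (j.1 + 1) : ℕ) : ℝ) + s + if i = j then t else 0)
        * (S i.1 - S (i.1+1)) * (S j.1 - S (j.1+1))
    = ∑ k ∈ range n, (S k)^2 + s * (S 0)^2 + t * ∑ k ∈ range n, (S k - S (k+1))^2 := by
  rw [key_identity s t n (fun i => S i.1 - S (i.1+1))]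
  congr 1
  · congr 1
    · apply sum_congr rfl
      intro k hk
      rw [partial_sum n S hS k (le_of_lt (mem_range.mp hk))]
    · have h0 := partial_sum n S hS 0 (Nat.zero_le n)
      simp only [Nat.zero_le, if_true] at h0
      rw [h0]
  · congr 1
    exact Fin.sum_univ_eq_sum_range (fun k => (S k - S (k+1))^2) n

private lemma pow_sq (ρ : ℝ) (k : ℕ) : (ρ^k)^2 = (ρ^2)^k := by
  rw [← pow_mul, mul_comm, pow_mul]

set_option maxHeartbeats 1600000 in
/-- The infinite matrix `A_∞(s,t) = [min{i,j} + s + t·δᵢⱼ]_{i,j≥1}` is positive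
semidefinite (i.e. every finite truncation of the quadratic form is nonnegative)
iff `1 + 4t ≥ 0` and `1 + 2s + √(1+4t) ≥ 0`. -/
theorem A_infty_posSemidef_iff (s t : ℝ) :
    (∀ n : ℕ, 1 ≤ n → ∀ x : Fin n → ℝ,
        0 ≤ ∑ i : Fin n, ∑ j : Fin n,
          (((min (i.1 + 1) (j.1 + 1) : ℕ) : ℝ) + s + if i = j then t else 0)
            * x i * x j) ↔
      0 ≤ 1 + 4 * t ∧ 0 ≤ 1 + 2 * s + Real.sqrt (1 + 4 * t) := by
  constructor
  · -- forward direction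
    intro hpos
    have ht : 0 ≤ 1 + 4 * t := by
      by_contra hlt
      push_neg at hlt
      set ε : ℝ := -(1 + 4*t) with hεdef
      have hε : 0 < ε := by simp [hεdef]; linarith
      obtain ⟨m₀, hm₀⟩ := exists_nat_ge ((-6*t)/ε)
      set m : ℕ := m₀ + 1 with hmdef
      have hm1 : (1:ℝ) ≤ (m:ℝ) := by exact_mod_cast Nat.one_le_iff_ne_zero.mpr (by omega)
      have hm : (-6*t)/ε ≤ (m:ℝ) := le_trans hm₀ (by exact_mod_cast Nat.le_succ m₀)
      set n : ℕ := m + 1 with hndef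
      set S : ℕ → ℝ := fun k => if k < n then (-1:ℝ)^k * k else 0 with hSdef
      have hSn : S n = 0 := by simp [hSdef]
      have h0 := hpos n (by omega) (fun i => S i.1 - S (i.1+1))
      rw [Q_of_S s t n S hSn] at h0
      have hS0 : S 0 = 0 := by simp [hSdef]
      have hA : ∑ k ∈ range n, (S k)^2 = ∑ k ∈ range n, ((k:ℝ))^2 := by
        apply sum_congr rfl
        intro k hk
        rw [mem_range] at hk
        simp only [hSdef, if_pos hk]
        rw [mul_pow, pow_sq, neg_one_sq, one_pow, one_mul]
      have hB : ∑ k ∈ range n, (S k - S (k+1))^2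
          = ∑ k ∈ range m, (2*(k:ℝ)+1)^2 + ((m:ℝ))^2 := by
        rw [hndef, sum_range_succ]
        congr 1
        · apply sum_congr rfl
          intro k hk
          rw [mem_range] at hk
          have h1 : k < n := by omega
          have h2 : k + 1 < n := by omega
          simp only [hSdef, if_pos h1, if_pos h2]
          push_cast
          have : (-1:ℝ)^k * (k:ℝ) - (-1:ℝ)^(k+1) * ((k:ℝ)+1) = (-1:ℝ)^k * (2*(k:ℝ)+1) := by
            rw [pow_succ]; ring
          rw [this, mul_pow, pow_sq, neg_one_sq, one_pow, one_mul]
        · have h1 : m < n := by omega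
          have h2 : ¬ (m + 1 < n) := by omega
          simp only [hSdef, if_pos h1, if_neg h2]
          rw [sub_zero, mul_pow, pow_sq, neg_one_sq, one_pow, one_mul]
      rw [hA, hB, hS0, sum_sq_formula n, sum_odd_sq_formula m] at h0
      have hcast : (n:ℝ) = (m:ℝ) + 1 := by exact_mod_cast rfl
      rw [hcast] at h0
      have hεm : -6*t ≤ ε * (m:ℝ) := by
        rw [div_le_iff₀ hε] at hm; linarith [hm]
      have hbr : (1+4*t)*(2*(m:ℝ)+1) - 6*t < 0 := by nlinarith [hεm, hε, hm1]
      have hmm : (0:ℝ) < (m:ℝ)*((m:ℝ)+1) := by nlinarith [hm1]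
      have h6 : 0 ≤ ((m:ℝ))*((m:ℝ)+1)*((1+4*t)*(2*(m:ℝ)+1) - 6*t) := by nlinarith [h0]
      have hneg := mul_pos hmm (show (0:ℝ) < -((1+4*t)*(2*(m:ℝ)+1) - 6*t) by linarith)
      nlinarith [h6, hneg]
    refine ⟨ht, ?_⟩
    by_contra hc
    push_neg at hc
    set D : ℝ := Real.sqrt (1 + 4*t) with hDdef
    have hD2 : D^2 = 1 + 4*t := Real.sq_sqrt ht
    have hD0 : 0 ≤ D := Real.sqrt_nonneg _
    have hD : 1 + 2*s + D < 0 := hc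
    -- find u ∈ (0,2) with 1 + 2su + (t-s)u² < 0
    have hu : ∃ u : ℝ, 0 < u ∧ u < 2 ∧ 1 + 2*s*u + (t-s)*u^2 < 0 := by
      rcases eq_or_lt_of_le hD0 with h0 | hDpos
      · -- D = 0, so t = -1/4 and s < -1/2
        have ht4 : 1 + 4*t = 0 := by rw [← hD2, ← h0]; ring
        have hs : 1 + 2*s < 0 := by rw [← h0] at hD; linarith
        have hden : 1 + 4*s < 0 := by linarith
        set δ : ℝ := min 1 (2*(1+2*s)/(1+4*s)) with hδdef
        have hratio : 0 < 2*(1+2*s)/(1+4*s) :=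
          div_pos_of_neg_of_neg (by linarith) hden
        have hδpos : 0 < δ := lt_min one_pos hratio
        have hδ1 : δ ≤ 1 := min_le_left _ _
        have hδr : δ ≤ 2*(1+2*s)/(1+4*s) := min_le_right _ _
        have hRmul : 2*(1+2*s)/(1+4*s) * (1+4*s) = 2*(1+2*s) :=
          div_mul_cancel₀ _ (ne_of_lt hden)
        have hδr' : δ * (1+4*s) ≥ 2*(1+2*s) := by nlinarith [hδr, hden, hRmul]
        refine ⟨2 - δ, by linarith, by linarith, ?_⟩
        have htval : t = -(1/4) := by linarith
        rw [htval]
        nlinarith [hδpos, hδ1, hδr', hs, hden]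
      · -- D > 0
        refine ⟨2/(1+D), by positivity, ?_, ?_⟩
        · rw [div_lt_iff₀ (by linarith)]; linarith
        · have h1D : (0:ℝ) < 1 + D := by linarith
          have h2 : (2/(1+D))*(1+D) = 2 := div_mul_cancel₀ 2 (ne_of_gt h1D)
          have hform : (1+D)^2 * (1 + 2*s*(2/(1+D)) + (t-s)*(2/(1+D))^2)
              = 2*D*(1+2*s+D) := by
            linear_combination (2*s*(1+D) + (t-s)*((2/(1+D))*(1+D)+2)) * h2 - hD2
          nlinarith [hform, pow_pos h1D 2,
            mul_pos hDpos (show (0:ℝ) < -(1+2*s+D) by linarith)]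
    obtain ⟨u, hu0, hu2, hg⟩ := hu
    obtain ⟨ρ, hρdef⟩ : ∃ ρ : ℝ, ρ = 1 - u := ⟨_, rfl⟩
    obtain ⟨q, hqdef⟩ : ∃ q : ℝ, q = ρ^2 := ⟨_, rfl⟩
    have hq0 : 0 ≤ q := by rw [hqdef]; exact sq_nonneg ρ
    have hq1 : q < 1 := by rw [hqdef, hρdef]; nlinarith [mul_pos hu0 (show (0:ℝ) < 2 - u by linarith)]
    obtain ⟨C1, hC1def⟩ : ∃ C1 : ℝ, C1 = 1 + t*u^2 := ⟨_, rfl⟩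
    have hgq : C1 + s*(1-q) < 0 := by
      rw [hC1def, hqdef, hρdef]; nlinarith [hg]
    -- the limit is negative
    have hL : C1 * (1-q)⁻¹ + (1+t)*0 + s < 0 := by
      have h1q : (1:ℝ) - q ≠ 0 := ne_of_gt (by linarith)
      have heq : C1 * (1-q)⁻¹ + (1+t)*0 + s = (C1 + s*(1-q))/(1-q) := by
        field_simp
        ring
      rw [heq]
      exact div_neg_of_neg_of_pos hgq (by linarith)
    have htend : Filter.Tendsto
        (fun N => C1 * (∑ k ∈ range N, q^k) + (1+t)*q^N + s)
        Filter.atTop (nhds (C1 * (1-q)⁻¹ + (1+t)*0 + s)) := by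
      have hgeo := (hasSum_geometric_of_lt_one hq0 hq1).tendsto_sum_nat
      have hpow := tendsto_pow_atTop_nhds_zero_of_lt_one hq0 hq1
      exact (((hgeo.const_mul C1).add (hpow.const_mul (1+t))).add tendsto_const_nhds)
    obtain ⟨N, hN⟩ := (htend.eventually (gt_mem_nhds hL)).exists
    -- build the test vector
    set n : ℕ := N + 1 with hndef
    set S : ℕ → ℝ := fun k => if k ≤ N then ρ^k else 0 with hSdef
    have hSn : S n = 0 := by simp [hSdef, hndef]
    have h0 := hpos n (by omega) (fun i => S i.1 - S (i.1+1))
    rw [Q_of_S s t n S hSn] at h0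
    have hS0 : S 0 = 1 := by simp [hSdef]
    have hA : ∑ k ∈ range n, (S k)^2 = ∑ k ∈ range N, q^k + q^N := by
      rw [hndef, sum_range_succ]
      congr 1
      · apply sum_congr rfl
        intro k hk
        rw [mem_range] at hk
        simp only [hSdef, if_pos (le_of_lt hk)]
        rw [pow_sq, ← hqdef]
      · simp only [hSdef, le_refl, if_pos]
        rw [pow_sq, ← hqdef]
    have hB : ∑ k ∈ range n, (S k - S (k+1))^2
        = u^2 * (∑ k ∈ range N, q^k) + q^N := by
      rw [hndef, sum_range_succ, mul_sum]
      congr 1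
      · apply sum_congr rfl
        intro k hk
        rw [mem_range] at hk
        simp only [hSdef, if_pos (le_of_lt hk), if_pos (Nat.succ_le_of_lt hk)]
        have : ρ^k - ρ^(k+1) = ρ^k * u := by rw [pow_succ, hρdef]; ring
        rw [this, mul_pow, pow_sq, ← hqdef]
        ring
      · simp only [hSdef, le_refl, if_pos, Nat.lt_irrefl]
        have : ¬ (N + 1 ≤ N) := by omega
        rw [if_neg this, sub_zero, pow_sq, ← hqdef]
    rw [hA, hB, hS0] at h0
    have : C1 * (∑ k ∈ range N, q^k) + (1+t)*q^N + s
        = (∑ k ∈ range N, q^k + q^N) + s * 1^2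
          + t * (u^2 * (∑ k ∈ range N, q^k) + q^N) := by
      rw [hC1def]; ring
    rw [this] at hN
    linarith
  · -- reverse direction
    rintro ⟨ht, hs⟩ n hn x
    set D : ℝ := Real.sqrt (1 + 4*t) with hDdef
    have hD2 : D^2 = 1 + 4*t := Real.sq_sqrt ht
    have hD0 : 0 ≤ D := Real.sqrt_nonneg _
    set a : ℝ := (1 + D)/2 with hadef
    set b : ℝ := (D - 1)/2 with hbdef
    have hab : a * b = t := by rw [hadef, hbdef]; nlinarith [hD2]
    have hh : a^2 + b^2 = 1 + 2*(a*b) := by rw [hadef, hbdef]; ring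
    set S : ℕ → ℝ := fun k => ∑ i : Fin n, if k ≤ i.1 then x i else 0 with hSdef
    have hSn : S n = 0 := by
      rw [hSdef]
      apply sum_eq_zero
      intro i _
      rw [if_neg (by omega : ¬ n ≤ i.1)]
    have hstep : ∀ i : Fin n, x i = S i.1 - S (i.1+1) := by
      intro i
      rw [hSdef]
      simp only
      rw [← sum_sub_distrib]
      have : ∀ j : Fin n, ((if i.1 ≤ j.1 then x j else 0) - (if i.1+1 ≤ j.1 then x j else 0))
          = if j = i then x j else 0 := by
        intro j
        rcases eq_or_ne j i with rfl | hne
        · rw [if_pos rfl, if_pos (le_refl _), if_neg (by omega)]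
          ring
        · have : j.1 ≠ i.1 := fun h => hne (Fin.ext h)
          rw [if_neg hne]
          rcases lt_or_gt_of_ne this with h | h
          · rw [if_neg (by omega), if_neg (by omega)]; ring
          · rw [if_pos (by omega), if_pos (by omega)]; ring
      rw [sum_congr rfl fun j _ => this j, sum_ite_eq' univ i x, if_pos (mem_univ i)]
    have hx : ∀ i : Fin n, x i = S i.1 - S (i.1+1) := hstep
    calc (0:ℝ) ≤ (1 + s + a*b - b^2) * (S 0)^2
          + ∑ k ∈ range n, (a * S (k+1) - b * S k)^2 + (a*b - a^2) * (S n)^2 := by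
          rw [hSn]
          have hc0 : 0 ≤ 1 + s + a*b - b^2 := by
            rw [hadef, hbdef] at *
            nlinarith [hD2, hs]
          have : (0:ℝ) ≤ ∑ k ∈ range n, (a * S (k+1) - b * S k)^2 :=
            sum_nonneg fun k _ => sq_nonneg _
          nlinarith [mul_nonneg hc0 (sq_nonneg (S 0)), this]
      _ = ∑ k ∈ range n, (S k)^2 + s * (S 0)^2
          + (a*b) * ∑ k ∈ range n, (S k - S (k+1))^2 := (sos_identity a b s hh S n).symm
      _ = ∑ i : Fin n, ∑ j : Fin n,
          (((min (i.1 + 1) (j.1 + 1) : ℕ) : ℝ) + s + if i = j then t else 0)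
            * x i * x j := by
          rw [hab, ← Q_of_S s t n S hSn]
          apply sum_congr rfl
          intro i _
          apply sum_congr rfl
          intro j _
          rw [hx i, hx j]
end

section
/- For every integer n ≥ 2, define x_i := (-1)^i · sin((2i−1)π/(2n)) for i = 1,…,n. Then: (1) ∑_{i=1}^{n} x_i = 0; (2) ∑_{i=1}^{n} x_i² = n/2; (3) ∑_{i=1}^{n} ∑_{j=1}^{n} |i−j|·x_i·x_j = (-1/(1+cos(π/n)))·(n/2). -/
open Real

private lemma cpos' (n : ℕ) (hn : 2 ≤ n) : 0 < Real.cos (π/(2*n)) := by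
  apply Real.cos_pos_of_mem_Ioo
  constructor
  · have : (0:ℝ) < π/(2*n) := by positivity
    linarith [Real.pi_pos]
  · rw [div_lt_div_iff₀ (by positivity) (by norm_num)]
    have : (2:ℝ) ≤ (n:ℝ) := by exact_mod_cast hn
    nlinarith [Real.pi_pos]

private lemma spos' (n : ℕ) (hn : 2 ≤ n) : 0 < Real.sin (π/n) := by
  apply Real.sin_pos_of_pos_of_lt_pi
  · positivity
  · have : (2:ℝ) ≤ (n:ℝ) := by exact_mod_cast hn
    rw [div_lt_iff₀ (by linarith)]
    nlinarith [Real.pi_pos]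

private lemma key1' (n : ℕ) (hn : 2 ≤ n) (m : ℕ) :
    ∑ k ∈ Finset.range m, ((-1:ℝ)^(k+1) * Real.sin ((2 * ((k:ℝ) + 1) - 1) * π / (2 * n))) =
      (-1)^m * Real.sin (m*π/n) / (2 * Real.cos (π/(2*n))) := by
  have hn0 : (n:ℝ) ≠ 0 := by positivity
  have hc := cpos' n hn
  induction m with
  | zero => simp
  | succ m ih =>
    rw [Finset.sum_range_succ, ih]
    have trig : Real.sin (((m:ℝ)+1)*π/n) + Real.sin ((m:ℝ)*π/n) =
        2 * Real.sin ((2*((m:ℝ)+1)-1)*π/(2*n)) * Real.cos (π/(2*n)) := by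
      have h := Real.sin_sub_sin (((m:ℝ)+1)*π/n) (-((m:ℝ)*π/n))
      rw [Real.sin_neg, sub_neg_eq_add] at h
      rw [h]
      congr 2
      · field_simp; ring
      · field_simp; ring
    push_cast
    rw [pow_succ]
    have hT : Real.sin ((2*((m:ℝ)+1)-1)*π/(2*n)) =
        (Real.sin (((m:ℝ)+1)*π/n) + Real.sin ((m:ℝ)*π/n)) / (2 * Real.cos (π/(2*n))) := by
      rw [eq_div_iff (mul_pos two_pos hc).ne']; linear_combination -trig
    rw [hT]; ring

private lemma key2' (n : ℕ) (hn : 2 ≤ n) (m : ℕ) :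
    ∑ k ∈ Finset.range m, Real.cos ((2*(k:ℝ)+1)*π/n) =
      Real.sin (2*(m:ℝ)*π/n) / (2 * Real.sin (π/n)) := by
  have hn0 : (n:ℝ) ≠ 0 := by positivity
  have hs := spos' n hn
  induction m with
  | zero => simp
  | succ m ih =>
    rw [Finset.sum_range_succ, ih]
    have trig : Real.sin (2*((m:ℝ)+1)*π/n) - Real.sin (2*(m:ℝ)*π/n) =
        2 * Real.sin (π/n) * Real.cos ((2*(m:ℝ)+1)*π/n) := by
      rw [Real.sin_sub_sin]
      congr 2
      · field_simp; ring
      · field_simp; ring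
    push_cast
    have hC : Real.cos ((2*(m:ℝ)+1)*π/n) =
        (Real.sin (2*((m:ℝ)+1)*π/n) - Real.sin (2*(m:ℝ)*π/n)) / (2 * Real.sin (π/n)) := by
      rw [eq_div_iff (mul_pos two_pos hs).ne']; linear_combination -trig
    rw [hC]; ring

private lemma key3' (n : ℕ) (hn : 2 ≤ n) (m : ℕ) :
    ∑ k ∈ Finset.range m, Real.cos ((2*(k:ℝ)+2)*π/n) =
      Real.sin ((2*(m:ℝ)+1)*π/n) / (2 * Real.sin (π/n)) - 1/2 := by
  have hn0 : (n:ℝ) ≠ 0 := by positivity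
  have hs := spos' n hn
  induction m with
  | zero => rw [Finset.sum_range_zero]; field_simp; ring
  | succ m ih =>
    rw [Finset.sum_range_succ, ih]
    have trig : Real.sin ((2*((m:ℝ)+1)+1)*π/n) - Real.sin ((2*(m:ℝ)+1)*π/n) =
        2 * Real.sin (π/n) * Real.cos ((2*(m:ℝ)+2)*π/n) := by
      rw [Real.sin_sub_sin]
      congr 2
      · field_simp; ring
      · field_simp; ring
    push_cast
    have hC : Real.cos ((2*(m:ℝ)+2)*π/n) =
        (Real.sin ((2*((m:ℝ)+1)+1)*π/n) - Real.sin ((2*(m:ℝ)+1)*π/n)) / (2 * Real.sin (π/n)) := by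
      rw [eq_div_iff (mul_pos two_pos hs).ne']; linear_combination -trig
    rw [hC]; ring

/-- For `n ≥ 2` and `xᵢ = (-1)ⁱ sin((2i−1)π/(2n))`, `i = 1,…,n`:
`∑ xᵢ = 0`, `∑ xᵢ² = n/2`, and
`∑ᵢ∑ⱼ |i−j| xᵢ xⱼ = (-1/(1+cos(π/n)))·(n/2)`. -/
theorem path_graph_optimal_vector (n : ℕ) (hn : 2 ≤ n) (x : Fin n → ℝ)
    (hx : ∀ i : Fin n,
      x i = (-1) ^ (i.1 + 1) * Real.sin ((2 * ((i.1 : ℝ) + 1) - 1) * π / (2 * n))) :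
    (∑ i, x i) = 0 ∧
    (∑ i, (x i) ^ 2) = n / 2 ∧
    ∑ i : Fin n, ∑ j : Fin n, |(i : ℝ) - (j : ℝ)| * x i * x j =
      (-1 / (1 + Real.cos (π / n))) * (n / 2) := by
  have hn0 : (n:ℝ) ≠ 0 := by positivity
  have hc := cpos' n hn
  have hs := spos' n hn
  -- Part 1
  have p1 : (∑ i, x i) = 0 := by
    have e1 : (∑ i, x i) = ∑ k ∈ Finset.range n,
        ((-1:ℝ)^(k+1) * Real.sin ((2 * ((k:ℝ) + 1) - 1) * π / (2 * n))) := by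
      simp only [hx]
      exact Fin.sum_univ_eq_sum_range
        (fun k => (-1:ℝ)^(k+1) * Real.sin ((2 * ((k:ℝ) + 1) - 1) * π / (2 * n))) n
    rw [e1, key1' n hn n]
    have : (n:ℝ)*π/n = π := by field_simp
    rw [this, Real.sin_pi]
    simp
  -- Part 2
  have p2 : (∑ i, (x i) ^ 2) = n / 2 := by
    have e2 : (∑ i, (x i)^2) = ∑ k ∈ Finset.range n,
        (((-1:ℝ)^(k+1) * Real.sin ((2 * ((k:ℝ) + 1) - 1) * π / (2 * n)))^2) := by
      simp only [hx]
      exact Fin.sum_univ_eq_sum_range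
        (fun k => ((-1:ℝ)^(k+1) * Real.sin ((2 * ((k:ℝ) + 1) - 1) * π / (2 * n)))^2) n
    rw [e2]
    have e3 : ∀ k ∈ Finset.range n,
        (((-1:ℝ)^(k+1) * Real.sin ((2 * ((k:ℝ) + 1) - 1) * π / (2 * n)))^2)
        = 1/2 - Real.cos ((2*(k:ℝ)+1)*π/n)/2 := by
      intro k _
      rw [mul_pow, ← pow_mul, mul_comm (k+1) 2, pow_mul]
      rw [Real.sin_sq_eq_half_sub]
      norm_num
      congr 1
      field_simp
      ring
    rw [Finset.sum_congr rfl e3, Finset.sum_sub_distrib]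
    have e4 : ∑ k ∈ Finset.range n, Real.cos ((2*(k:ℝ)+1)*π/n)/2
        = (∑ k ∈ Finset.range n, Real.cos ((2*(k:ℝ)+1)*π/n))/2 := by
      rw [Finset.sum_div]
    rw [e4, key2' n hn n]
    have : 2*(n:ℝ)*π/n = 2*π := by field_simp
    rw [this, Real.sin_two_pi]
    simp [Finset.sum_const]
    ring
  refine ⟨p1, p2, ?_⟩
  -- Part 3
  -- abbreviation for the partial sums
  set A : ℕ → ℝ := fun k => ∑ i : Fin n, if i.1 ≤ k then x i else 0 with hA_def
  -- formula for A k
  have hA : ∀ k, k + 1 ≤ n → A k =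
      (-1:ℝ)^(k+1) * Real.sin (((k:ℝ)+1)*π/n) / (2 * Real.cos (π/(2*n))) := by
    intro k hk
    have e1 : A k = ∑ m ∈ Finset.range n,
        (if m ≤ k then ((-1:ℝ)^(m+1) * Real.sin ((2 * ((m:ℝ) + 1) - 1) * π / (2 * n))) else 0) := by
      rw [hA_def]
      simp only [hx]
      exact Fin.sum_univ_eq_sum_range
        (fun m => if m ≤ k then ((-1:ℝ)^(m+1) * Real.sin ((2 * ((m:ℝ) + 1) - 1) * π / (2 * n))) else 0) n
    have e2 : (Finset.range n).filter (fun m => m ≤ k) = Finset.range (k+1) := by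
      ext m
      simp only [Finset.mem_filter, Finset.mem_range]
      omega
    rw [e1, ← Finset.sum_filter, e2, key1' n hn (k+1)]
    push_cast
    ring_nf
  -- complementary sums
  have hB : ∀ k : ℕ, (∑ j : Fin n, if k < j.1 then x j else 0) = - A k := by
    intro k
    have : A k + (∑ j : Fin n, if k < j.1 then x j else 0) = ∑ j, x j := by
      rw [hA_def, ← Finset.sum_add_distrib]
      refine Finset.sum_congr rfl fun j _ => ?_
      by_cases h : j.1 ≤ k
      · rw [if_pos h, if_neg (by omega), add_zero]
      · rw [if_neg h, if_pos (by omega), zero_add]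
    rw [p1] at this
    linarith
  -- rewrite |i - j| as a sum of indicators
  have habs : ∀ i j : Fin n, |(i:ℝ) - (j:ℝ)| = ∑ k ∈ Finset.range (n-1),
      (if (i.1 ≤ k ∧ k < j.1) ∨ (j.1 ≤ k ∧ k < i.1) then (1:ℝ) else 0) := by
    have helper : ∀ a b : ℕ, a ≤ b → b < n →
        (∑ k ∈ Finset.range (n-1),
          (if (a ≤ k ∧ k < b) ∨ (b ≤ k ∧ k < a) then (1:ℝ) else 0)) = (b:ℝ) - a := by
      intro a b hab hbn
      calc (∑ k ∈ Finset.range (n-1),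
              (if (a ≤ k ∧ k < b) ∨ (b ≤ k ∧ k < a) then (1:ℝ) else 0))
          = ∑ k ∈ Finset.range (n-1), (if a ≤ k ∧ k < b then (1:ℝ) else 0) :=
            Finset.sum_congr rfl fun k _ => if_congr (by omega) rfl rfl
        _ = ((Finset.range (n-1)).filter (fun k => a ≤ k ∧ k < b)).card :=
            Finset.sum_boole _ _
        _ = ((Finset.Ico a b).card : ℝ) := by
            congr 2
            ext k
            simp only [Finset.mem_filter, Finset.mem_range, Finset.mem_Ico]
            omega
        _ = (b:ℝ) - a := by rw [Nat.card_Ico, Nat.cast_sub hab]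
    intro i j
    rcases le_total i.1 j.1 with h | h
    · rw [helper i.1 j.1 h j.2, abs_of_nonpos (by
        have : (i.1:ℝ) ≤ (j.1:ℝ) := by exact_mod_cast h
        simpa using this)]
      try push_cast
      try ring
    · have e := helper j.1 i.1 h i.2
      have e2 : (∑ k ∈ Finset.range (n-1),
          (if (i.1 ≤ k ∧ k < j.1) ∨ (j.1 ≤ k ∧ k < i.1) then (1:ℝ) else 0))
          = ∑ k ∈ Finset.range (n-1),
          (if (j.1 ≤ k ∧ k < i.1) ∨ (i.1 ≤ k ∧ k < j.1) then (1:ℝ) else 0) :=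
        Finset.sum_congr rfl fun k _ => if_congr (by omega) rfl rfl
      rw [e2, e, abs_of_nonneg (by
        have : (j.1:ℝ) ≤ (i.1:ℝ) := by exact_mod_cast h
        simpa using this)]
      try push_cast
      try ring
  -- expand the double sum
  have step1 : ∑ i : Fin n, ∑ j : Fin n, |(i : ℝ) - (j : ℝ)| * x i * x j
      = ∑ k ∈ Finset.range (n-1), ∑ i : Fin n, ∑ j : Fin n,
        (if (i.1 ≤ k ∧ k < j.1) ∨ (j.1 ≤ k ∧ k < i.1) then (1:ℝ) else 0) * x i * x j := by
    calc ∑ i : Fin n, ∑ j : Fin n, |(i : ℝ) - (j : ℝ)| * x i * x j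
        = ∑ i : Fin n, ∑ j : Fin n, ∑ k ∈ Finset.range (n-1),
            ((if (i.1 ≤ k ∧ k < j.1) ∨ (j.1 ≤ k ∧ k < i.1) then (1:ℝ) else 0) * x i * x j) := by
          refine Finset.sum_congr rfl fun i _ => Finset.sum_congr rfl fun j _ => ?_
          rw [habs i j, Finset.sum_mul, Finset.sum_mul]
      _ = ∑ i : Fin n, ∑ k ∈ Finset.range (n-1), ∑ j : Fin n,
            ((if (i.1 ≤ k ∧ k < j.1) ∨ (j.1 ≤ k ∧ k < i.1) then (1:ℝ) else 0) * x i * x j) :=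
          Finset.sum_congr rfl fun i _ => Finset.sum_comm
      _ = _ := Finset.sum_comm
  rw [step1]
  -- inner double sum equals -2 (A k)^2
  have step2 : ∀ k ∈ Finset.range (n-1), (∑ i : Fin n, ∑ j : Fin n,
      (if (i.1 ≤ k ∧ k < j.1) ∨ (j.1 ≤ k ∧ k < i.1) then (1:ℝ) else 0) * x i * x j)
      = -2 * (A k)^2 := by
    intro k hk
    have hsplit : ∀ i j : Fin n,
        (if (i.1 ≤ k ∧ k < j.1) ∨ (j.1 ≤ k ∧ k < i.1) then (1:ℝ) else 0) * x i * x j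
        = (if i.1 ≤ k then x i else 0) * (if k < j.1 then x j else 0)
          + (if k < i.1 then x i else 0) * (if j.1 ≤ k then x j else 0) := by
      intro i j
      by_cases h1 : i.1 ≤ k <;> by_cases h2 : j.1 ≤ k
      · rw [if_neg (by omega), if_pos h1, if_neg (by omega), if_neg (by omega), if_pos h2]
        ring
      · rw [if_pos (by omega), if_pos h1, if_pos (by omega), if_neg (by omega), if_neg h2]
        ring
      · rw [if_pos (by omega), if_neg h1, if_neg (by omega), if_pos (by omega), if_pos h2]
        ring
      · rw [if_neg (by omega), if_neg h1, if_pos (by omega), if_pos (by omega), if_neg h2]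
        ring
    calc (∑ i : Fin n, ∑ j : Fin n,
          (if (i.1 ≤ k ∧ k < j.1) ∨ (j.1 ≤ k ∧ k < i.1) then (1:ℝ) else 0) * x i * x j)
        = ∑ i : Fin n, ∑ j : Fin n,
            ((if i.1 ≤ k then x i else 0) * (if k < j.1 then x j else 0)
            + (if k < i.1 then x i else 0) * (if j.1 ≤ k then x j else 0)) :=
          Finset.sum_congr rfl fun i _ => Finset.sum_congr rfl fun j _ => hsplit i j
      _ = (∑ i : Fin n, if i.1 ≤ k then x i else 0) * (∑ j : Fin n, if k < j.1 then x j else 0)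
          + (∑ i : Fin n, if k < i.1 then x i else 0) * (∑ j : Fin n, if j.1 ≤ k then x j else 0) := by
          rw [Finset.sum_mul_sum, Finset.sum_mul_sum, ← Finset.sum_add_distrib]
          exact Finset.sum_congr rfl fun i _ => by rw [← Finset.sum_add_distrib]
      _ = -2 * (A k)^2 := by
          rw [hB k, hA_def]
          ring
  rw [Finset.sum_congr rfl step2]
  -- evaluate using hA
  have step3 : ∀ k ∈ Finset.range (n-1), -2 * (A k)^2
      = -(Real.sin (((k:ℝ)+1)*π/n))^2 / (2 * (Real.cos (π/(2*n)))^2) := by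
    intro k hk
    rw [Finset.mem_range] at hk
    rw [hA k (by omega)]
    rw [div_pow, mul_pow, mul_pow]
    rw [← pow_mul, mul_comm (k+1) 2, pow_mul]
    norm_num
    field_simp
    ring
  rw [Finset.sum_congr rfl step3]
  have step4 : ∑ k ∈ Finset.range (n-1),
      (-(Real.sin (((k:ℝ)+1)*π/n))^2 / (2 * (Real.cos (π/(2*n)))^2))
      = -(∑ k ∈ Finset.range (n-1), (Real.sin (((k:ℝ)+1)*π/n))^2) / (2 * (Real.cos (π/(2*n)))^2) := by
    rw [← Finset.sum_neg_distrib, Finset.sum_div]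
  rw [step4]
  -- compute the sum of sin^2
  have step5 : ∑ k ∈ Finset.range (n-1), (Real.sin (((k:ℝ)+1)*π/n))^2 = n/2 := by
    have e1 : ∀ k ∈ Finset.range (n-1), (Real.sin (((k:ℝ)+1)*π/n))^2
        = 1/2 - Real.cos ((2*(k:ℝ)+2)*π/n)/2 := by
      intro k _
      rw [Real.sin_sq_eq_half_sub]
      congr 2
      field_simp
    rw [Finset.sum_congr rfl e1, Finset.sum_sub_distrib]
    have e2 : ∑ k ∈ Finset.range (n-1), Real.cos ((2*(k:ℝ)+2)*π/n)/2
        = (∑ k ∈ Finset.range (n-1), Real.cos ((2*(k:ℝ)+2)*π/n))/2 := (Finset.sum_div _ _ _).symm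
    rw [e2, key3' n hn (n-1)]
    have hcast : ((n-1:ℕ):ℝ) = (n:ℝ) - 1 := by
      rw [Nat.cast_sub (by omega)]; norm_num
    rw [hcast]
    have e3 : (2*((n:ℝ)-1)+1)*π/n = 2*π - π/n := by field_simp; ring
    rw [e3, Real.sin_sub, Real.sin_two_pi, Real.cos_two_pi]
    simp only [Finset.sum_const, Finset.card_range, nsmul_eq_mul, hcast]
    field_simp
    ring
  rw [step5]
  -- final arithmetic
  have h2c : 2 * (Real.cos (π/(2*n)))^2 = 1 + Real.cos (π/n) := by
    rw [Real.cos_sq]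
    have : 2 * (π/(2*n)) = π/n := by field_simp
    rw [this]
    ring
  rw [h2c]
  have hpos : 0 < 1 + Real.cos (π/n) := by rw [← h2c]; positivity
  field_simp
end
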